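/- arXiv:1112.5942 — 4 statements merged into one kernel-verified Lean document; each statement's English description precedes it below -/
import Mathlib

section
/- If X₁, …, X_{n+1} are compact subsets of ℝⁿ and the origin 0 lies in conv X_i for every i, then there exist points x_i ∈ X_i (i = 1, …, n+1) and nonnegative coefficients t_i summing to 1 such that 0 = t₁x₁ + ⋯ + t_{n+1}x_{n+1}. Equivalently, 0 ∈ X₁ * X₂ * ⋯ * X_{n+1}, the geometric join. -/
open Finset
open scoped RealInnerProductSpace

section helpers

variable {E : Type*} [NormedAddCommGroup E] [InnerProductSpace ℝ E]

/-- If `⟪p, w⟫ < ‖p‖²`, then some point of the segment `[p, w]` is strictly closer to `0`. -/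
lemma step_aux {p w : E} (h : ⟪p, w⟫ < ‖p‖ ^ 2) :
    ∃ s : ℝ, 0 ≤ s ∧ s ≤ 1 ∧ ‖(1 - s) • p + s • w‖ < ‖p‖ := by
  have hp : p ≠ 0 := by rintro rfl; simp at h
  set δ : ℝ := ‖p‖ ^ 2 - ⟪p, w⟫ with hδ
  have hd : 0 < δ := by simp only [hδ]; linarith
  have hwp : w - p ≠ 0 := by
    intro hwp
    rw [sub_eq_zero.1 hwp, real_inner_self_eq_norm_sq] at h
    linarith
  set r : ℝ := ‖w - p‖ ^ 2 with hr
  have hrpos : 0 < r := by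
    have : 0 < ‖w - p‖ := norm_pos_iff.2 hwp
    positivity
  set s : ℝ := min 1 (δ / r) with hs
  have hs0 : 0 < s := lt_min one_pos (div_pos hd hrpos)
  have hs1 : s ≤ 1 := min_le_left _ _
  have hsr : s * r ≤ δ := by
    have h1 : s ≤ δ / r := min_le_right _ _
    calc s * r ≤ (δ / r) * r := by nlinarith
      _ = δ := by field_simp
  refine ⟨s, le_of_lt hs0, hs1, ?_⟩
  have hq : (1 - s) • p + s • w = p + s • (w - p) := by
    rw [smul_sub, sub_smul, one_smul]; abel
  rw [hq]
  have hnorm : ‖p + s • (w - p)‖ ^ 2 = ‖p‖ ^ 2 - 2 * s * δ + s ^ 2 * r := by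
    rw [norm_add_sq_real, real_inner_smul_right, norm_smul, inner_sub_right,
      real_inner_self_eq_norm_sq]
    simp only [Real.norm_eq_abs, mul_pow, sq_abs, hδ, hr]
    ring
  have hlt : ‖p + s • (w - p)‖ ^ 2 < ‖p‖ ^ 2 := by
    rw [hnorm]
    have : s ^ 2 * r = s * (s * r) := by ring
    nlinarith
  exact lt_of_pow_lt_pow_left₀ 2 (norm_nonneg p) hlt

/-- An affinely independent family lying in an affine hyperplane `⟪p, ·⟫ = c`, `p ≠ 0`,
has at most `finrank` many members. -/
lemma card_le_finrank_of_inner_eq [FiniteDimensional ℝ E] {ι : Type} [Fintype ι]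
    {p : E} (hp : p ≠ 0) {z : ι → E} (hz : AffineIndependent ℝ z) {c : ℝ}
    (hc : ∀ i, ⟪p, z i⟫ = c) : Fintype.card ι ≤ Module.finrank ℝ E := by
  cases isEmpty_or_nonempty ι with
  | inl h => simp
  | inr h =>
    obtain ⟨i₀⟩ := h
    classical
    have : Nontrivial E := nontrivial_of_ne p 0 hp
    set f : E →ₗ[ℝ] ℝ :=
      { toFun := fun v => ⟪p, v⟫
        map_add' := fun x y => inner_add_right _ _ _
        map_smul' := fun c x => real_inner_smul_right _ _ _ } with hf
    have hfp : f p = ‖p‖ ^ 2 := real_inner_self_eq_norm_sq p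
    have hnp : (0 : ℝ) < ‖p‖ ^ 2 := by
      have : 0 < ‖p‖ := norm_pos_iff.2 hp
      positivity
    have hsurj : Function.Surjective f := by
      intro t
      refine ⟨(t / ‖p‖ ^ 2) • p, ?_⟩
      simp only [hf, LinearMap.coe_mk, AddHom.coe_mk, real_inner_smul_right,
        real_inner_self_eq_norm_sq]
      field_simp
    have hrange : LinearMap.range f = ⊤ := LinearMap.range_eq_top.2 hsurj
    have hrk := f.finrank_range_add_finrank_ker
    rw [hrange, finrank_top, Module.finrank_self] at hrk
    -- the difference family is linearly independent inside the kernel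
    have li : LinearIndependent ℝ (fun i : {x : ι // x ≠ i₀} => z ↑i -ᵥ z i₀) :=
      (affineIndependent_iff_linearIndependent_vsub ℝ z i₀).1 hz
    have hker : ∀ i : {x : ι // x ≠ i₀}, z ↑i - z i₀ ∈ LinearMap.ker f := by
      intro i
      simp only [LinearMap.mem_ker, hf, LinearMap.coe_mk, AddHom.coe_mk, inner_sub_right,
        hc, sub_self]
    set v : {x : ι // x ≠ i₀} → LinearMap.ker f := fun i => ⟨z ↑i - z i₀, hker i⟩ with hv
    have liv : LinearIndependent ℝ v := by
      apply LinearIndependent.of_comp (LinearMap.ker f).subtype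
      convert li using 1
      funext i
      rfl
    have hcard1 : Fintype.card {x : ι // x ≠ i₀} ≤ Module.finrank ℝ (LinearMap.ker f) :=
      liv.fintype_card_le_finrank
    have hcard2 : Fintype.card {x : ι // x ≠ i₀} = Fintype.card ι - 1 := by
      rw [Fintype.card_subtype_compl, Fintype.card_subtype_eq]
    have : Nonempty ι := ⟨i₀⟩
    have hpos : 0 < Fintype.card ι := Fintype.card_pos
    omega

/-- Express membership of `0` in the convex hull of the range of a finite family as a
convex combination indexed by that family. -/
lemma exists_weights {m : ℕ} {F : Type*} [AddCommGroup F] [Module ℝ F]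
    (x₀ : Fin m → F) (h : (0 : F) ∈ convexHull ℝ (Set.range x₀)) :
    ∃ t : Fin m → ℝ, (∀ i, 0 ≤ t i) ∧ ∑ i, t i = 1 ∧ ∑ i, t i • x₀ i = 0 := by
  obtain ⟨ι, _, w, z, hw0, hw1, hz, hsum⟩ := mem_convexHull_iff_exists_fintype.1 h
  have hex : ∀ i, ∃ j, x₀ j = z i := fun i => hz i
  choose g hg using hex
  refine ⟨fun j => ∑ i ∈ univ.filter (fun i => g i = j), w i, ?_, ?_, ?_⟩
  · intro j; exact Finset.sum_nonneg fun i _ => hw0 i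
  · rw [← hw1]; exact Finset.sum_fiberwise_of_maps_to (fun i _ => Finset.mem_univ _) w
  · have key : ∀ j : Fin m, (∑ i ∈ univ.filter (fun i => g i = j), w i) • x₀ j
        = ∑ i ∈ univ.filter (fun i => g i = j), w i • x₀ (g i) := by
      intro j
      rw [Finset.sum_smul]
      exact Finset.sum_congr rfl fun i hi => by rw [(Finset.mem_filter.1 hi).2]
    rw [Finset.sum_congr rfl fun j _ => key j,
      Finset.sum_fiberwise_of_maps_to (fun i _ => Finset.mem_univ _)]
    simp_rw [hg]
    exact hsum

end helpers

/-- Colorful Carathéodory theorem (Bárány 1982): if `0 ∈ conv (X i)` for `n+1` compacta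
in `ℝⁿ`, then `0` is a convex combination of a system of representatives of the `X i`. -/
theorem colorful_caratheodory {n : ℕ} (X : Fin (n + 1) → Set (EuclideanSpace ℝ (Fin n)))
    (hcpt : ∀ i, IsCompact (X i)) (h0 : ∀ i, (0 : EuclideanSpace ℝ (Fin n)) ∈ convexHull ℝ (X i)) :
    ∃ (x : Fin (n + 1) → EuclideanSpace ℝ (Fin n)) (t : Fin (n + 1) → ℝ),
      (∀ i, x i ∈ X i) ∧ (∀ i, 0 ≤ t i) ∧ ∑ i, t i = 1 ∧
      ∑ i, t i • x i = (0 : EuclideanSpace ℝ (Fin n)) := by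
  classical
  -- replace each `X i` by a finite subset whose convex hull contains `0`
  have hfin : ∀ i, ∃ Y : Finset (EuclideanSpace ℝ (Fin n)), ↑Y ⊆ X i ∧ (0 : (EuclideanSpace ℝ (Fin n))) ∈ convexHull ℝ (Y : Set (EuclideanSpace ℝ (Fin n))) := by
    intro i
    have := h0 i
    rw [convexHull_eq_union_convexHull_finite_subsets] at this
    simp only [Set.mem_iUnion, exists_prop] at this
    exact this
  choose Y hYX h0Y using hfin
  have hYne : ∀ i, (Y i).Nonempty := by
    intro i
    rcases (Y i).eq_empty_or_nonempty with h | h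
    · exfalso; have := h0Y i; rw [h] at this; simp at this
    · exact h
  -- minimize the distance from `0` to the convex hull of a transversal
  set T : Finset (Fin (n + 1) → (EuclideanSpace ℝ (Fin n))) := Fintype.piFinset Y with hT
  have hTne : T.Nonempty := Fintype.piFinset_nonempty.2 hYne
  set F : (Fin (n + 1) → (EuclideanSpace ℝ (Fin n))) → ℝ := fun f => Metric.infDist 0 (convexHull ℝ (Set.range f))
    with hF
  obtain ⟨x₀, hx₀T, hmin⟩ := T.exists_min_image F hTne
  have hx₀mem : ∀ i, x₀ i ∈ Y i := Fintype.mem_piFinset.1 hx₀T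
  set K₀ : Set (EuclideanSpace ℝ (Fin n)) := convexHull ℝ (Set.range x₀) with hK₀
  have hK₀cvx : Convex ℝ K₀ := convex_convexHull ℝ _
  have hK₀cpt : IsCompact K₀ := (Set.finite_range x₀).isCompact_convexHull ℝ
  have hK₀ne : K₀.Nonempty := ⟨x₀ 0, subset_convexHull ℝ _ (Set.mem_range_self 0)⟩
  obtain ⟨p, hpK, hp_eq⟩ := hK₀cpt.exists_infDist_eq_dist hK₀ne 0
  have hFx₀ : F x₀ = ‖p‖ := by rw [hF]; simp only [← hK₀, hp_eq, dist_zero_left]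
  have hpmin : ∀ w ∈ K₀, ‖p‖ ≤ ‖w‖ := by
    intro w hw
    have h1 : Metric.infDist 0 K₀ ≤ dist 0 w := Metric.infDist_le_dist_of_mem hw
    rw [hp_eq] at h1
    simp only [dist_zero_left] at h1
    exact h1
  by_cases hp0 : p = 0
  · -- the minimum is zero: extract the weights
    have h00 : (0 : (EuclideanSpace ℝ (Fin n))) ∈ convexHull ℝ (Set.range x₀) := by rw [← hp0]; exact hpK
    obtain ⟨t, ht0, ht1, htsum⟩ := exists_weights x₀ h00
    exact ⟨x₀, t, fun i => hYX i (hx₀mem i), ht0, ht1, htsum⟩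
  · -- otherwise produce a strictly better transversal, a contradiction
    exfalso
    have hnp : (0 : ℝ) < ‖p‖ ^ 2 := by
      have : 0 < ‖p‖ := norm_pos_iff.2 hp0
      positivity
    -- variational inequality for the nearest point
    have hvar : ∀ w ∈ K₀, ‖p‖ ^ 2 ≤ ⟪p, w⟫ := by
      intro w hw
      by_contra hlt
      push_neg at hlt
      obtain ⟨s, hs0, hs1, hq⟩ := step_aux hlt
      have hmem : (1 - s) • p + s • w ∈ K₀ := hK₀cvx hpK hw (by linarith) hs0 (by ring)
      exact absurd (hpmin _ hmem) (not_le.2 hq)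
    -- positive affinely independent representation of `p`
    obtain ⟨ι, hι, z, w, hzr, hzi, hwpos, hw1, hsum⟩ :=
      eq_pos_convex_span_of_mem_convexHull hpK
    have hge : ∀ i, ‖p‖ ^ 2 ≤ ⟪p, z i⟫ := fun i =>
      hvar _ (subset_convexHull ℝ _ (hzr ⟨i, rfl⟩))
    have hsum2 : ∑ i, w i * ⟪p, z i⟫ = ‖p‖ ^ 2 := by
      have : ∑ i, w i * ⟪p, z i⟫ = ⟪p, ∑ i, w i • z i⟫ := by
        rw [inner_sum]
        exact Finset.sum_congr rfl fun i _ => (real_inner_smul_right _ _ _).symm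
      rw [this, hsum, real_inner_self_eq_norm_sq]
    have hall : ∀ i, ⟪p, z i⟫ = ‖p‖ ^ 2 := by
      by_contra hne
      push_neg at hne
      obtain ⟨i₀, hi₀⟩ := hne
      have hi₀' : ‖p‖ ^ 2 < ⟪p, z i₀⟫ := lt_of_le_of_ne (hge i₀) (Ne.symm hi₀)
      have hlt : ∑ i, w i * ‖p‖ ^ 2 < ∑ i, w i * ⟪p, z i⟫ := by
        apply Finset.sum_lt_sum
        · intro i _
          exact mul_le_mul_of_nonneg_left (hge i) (le_of_lt (hwpos i))
        · exact ⟨i₀, Finset.mem_univ _, by nlinarith [hwpos i₀]⟩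
      rw [← Finset.sum_mul, hw1, one_mul, hsum2] at hlt
      exact lt_irrefl _ hlt
    -- the representation uses at most `n` points
    have hcard : Fintype.card ι ≤ n := by
      have := card_le_finrank_of_inner_eq hp0 hzi hall
      rwa [finrank_euclideanSpace_fin] at this
    -- choose preimage indices; some index `j` is unused
    have hex : ∀ i, ∃ j, x₀ j = z i := fun i => hzr ⟨i, rfl⟩
    choose g hg using hex
    have hjex : ∃ j : Fin (n + 1), j ∉ Finset.univ.image g := by
      by_contra hj
      push_neg at hj
      have hsub : (Finset.univ : Finset (Fin (n + 1))) ⊆ Finset.univ.image g :=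
        fun j _ => hj j
      have := Finset.card_le_card hsub
      have h2 : (Finset.univ.image g).card ≤ Fintype.card ι := by
        simpa using Finset.card_image_le (s := Finset.univ) (f := g)
      simp only [Finset.card_univ, Fintype.card_fin] at this
      omega
    obtain ⟨j, hj⟩ := hjex
    have hpj : p ∈ convexHull ℝ (x₀ '' {k | k ≠ j}) := by
      refine mem_convexHull_of_exists_fintype w z (fun i => le_of_lt (hwpos i)) hw1 ?_ hsum
      intro i
      refine ⟨g i, ?_, hg i⟩
      intro hgi
      exact hj (by rw [← hgi]; exact Finset.mem_image_of_mem g (Finset.mem_univ i))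
    -- find a point of `Y j` on the other side of the hyperplane
    have hy : ∃ y ∈ Y j, ⟪p, y⟫ ≤ 0 := by
      by_contra hyc
      push_neg at hyc
      have hC : Convex ℝ {v : (EuclideanSpace ℝ (Fin n)) | 0 < ⟪p, v⟫} := by
        apply convex_halfSpace_gt
        exact ⟨fun x y => inner_add_right _ _ _, fun c x => real_inner_smul_right _ _ _⟩
      have hsubC : (Y j : Set (EuclideanSpace ℝ (Fin n))) ⊆ {v : (EuclideanSpace ℝ (Fin n)) | 0 < ⟪p, v⟫} := fun y hy => hyc y hy
      have := convexHull_min hsubC hC (h0Y j)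
      simp at this
    obtain ⟨y, hyY, hpy⟩ := hy
    -- strictly decrease the distance
    obtain ⟨s, hs0, hs1, hq⟩ := step_aux (lt_of_le_of_lt hpy hnp)
    set x₁ : Fin (n + 1) → (EuclideanSpace ℝ (Fin n)) := Function.update x₀ j y with hx₁
    have hx₁T : x₁ ∈ T := by
      rw [hT, Fintype.mem_piFinset]
      intro i
      by_cases hij : i = j
      · subst hij; simpa [hx₁] using hyY
      · simpa [hx₁, Function.update_of_ne hij] using hx₀mem i
    have hqmem : (1 - s) • p + s • y ∈ convexHull ℝ (Set.range x₁) := by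
      have h1 : x₀ '' {k | k ≠ j} ⊆ Set.range x₁ := by
        rintro _ ⟨k, hk, rfl⟩
        exact ⟨k, by rw [hx₁, Function.update_of_ne hk]⟩
      have hp' : p ∈ convexHull ℝ (Set.range x₁) := convexHull_mono h1 hpj
      have hy' : y ∈ convexHull ℝ (Set.range x₁) :=
        subset_convexHull ℝ _ ⟨j, by rw [hx₁, Function.update_self]⟩
      exact (convex_convexHull ℝ _) hp' hy' (by linarith) hs0 (by ring)
    have hFx₁ : F x₁ ≤ ‖(1 - s) • p + s • y‖ := by
      have := Metric.infDist_le_dist_of_mem (x := (0 : EuclideanSpace ℝ (Fin n))) hqmem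
      rwa [dist_zero_left] at this
    have hle : F x₀ ≤ F x₁ := hmin x₁ hx₁T
    rw [hFx₀] at hle
    linarith
end

section
/- Every set of (n+1)(r−1)+1 points in ℝⁿ can be partitioned into r parts whose convex hulls have a common point. -/
open Finset

open Module RealInnerProductSpace

variable {E : Type*} [NormedAddCommGroup E] [InnerProductSpace ℝ E] [FiniteDimensional ℝ E]

/-- Extract convex-combination weights from membership in the convex hull of a range. -/
lemma exists_weights_s12 {V : Type*} [AddCommGroup V] [Module ℝ V]
    {κ : Type*} [Fintype κ] [DecidableEq κ] {f : κ → V} {x : V}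
    (hx : x ∈ convexHull ℝ (Set.range f)) :
    ∃ c : κ → ℝ, (∀ i, 0 ≤ c i) ∧ ∑ i, c i = 1 ∧ ∑ i, c i • f i = x := by
  obtain ⟨ι', _, z, w, hz, _, hw0, hw1, hwx⟩ := eq_pos_convex_span_of_mem_convexHull hx
  have hchoice : ∀ k : ι', ∃ i : κ, f i = z k := fun k => hz ⟨k, rfl⟩
  choose idx hidx using hchoice
  refine ⟨fun i => ∑ k ∈ univ.filter (fun k => idx k = i), w k, ?_, ?_, ?_⟩
  · intro i; exact Finset.sum_nonneg fun k _ => (hw0 k).le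
  · rw [← hw1]; exact Finset.sum_fiberwise _ _ _
  · rw [← hwx]
    rw [← Finset.sum_fiberwise univ idx (fun k => w k • z k)]
    refine Finset.sum_congr rfl fun i _ => ?_
    rw [Finset.sum_smul]
    refine Finset.sum_congr rfl fun k hk => ?_
    rw [← (Finset.mem_filter.mp hk).2, hidx]

/-- **Colorful Carathéodory theorem**. -/
theorem colorful_caratheodory_s12 {ι : Type*} [Fintype ι] [DecidableEq ι]
    (hcard : finrank ℝ E + 1 ≤ Fintype.card ι)
    (S : ι → Finset E) (hS : ∀ i, (0 : E) ∈ convexHull ℝ (S i : Set E)) :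
    ∃ T : ι → E, (∀ i, T i ∈ S i) ∧ (0 : E) ∈ convexHull ℝ (Set.range T) := by
  classical
  have hSne : ∀ i, (S i).Nonempty := by
    intro i
    rcases (hS i) with h
    by_contra hemp
    rw [Finset.not_nonempty_iff_eq_empty] at hemp
    simp [hemp] at h
  -- minimize the distance to 0 over all transversals
  obtain ⟨T₀, hT₀mem, hT₀min⟩ := Finset.exists_min_image (Fintype.piFinset S)
    (fun T => Metric.infDist (0 : E) (convexHull ℝ (Set.range T)))
    (Fintype.piFinset_nonempty.mpr hSne)
  rw [Fintype.mem_piFinset] at hT₀mem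
  have hιne : Nonempty ι := Fintype.card_pos_iff.mp (by omega)
  have hKcompact : IsCompact (convexHull ℝ (Set.range T₀)) :=
    (Set.finite_range T₀).isCompact_convexHull ℝ
  have hKne : (convexHull ℝ (Set.range T₀)).Nonempty :=
    ⟨T₀ (Classical.arbitrary ι) , subset_convexHull ℝ _ ⟨_, rfl⟩⟩
  obtain ⟨x, hxK, hxdist⟩ := hKcompact.exists_infDist_eq_dist hKne 0
  refine ⟨T₀, hT₀mem, ?_⟩
  suffices hx0 : x = 0 by rwa [← hx0]
  by_contra hx
  -- variational inequality: every point of the hull has large inner product with x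
  have hvar : ∀ y ∈ convexHull ℝ (Set.range T₀), ‖x‖ ^ 2 ≤ ⟪x, y⟫ := by
    intro y hy
    have key : ∀ θ : ℝ, 0 < θ → θ ≤ 1 →
        0 ≤ 2 * ⟪x, y - x⟫ + θ * ‖y - x‖ ^ 2 := by
      intro θ hθ0 hθ1
      have hmem : x + θ • (y - x) ∈ convexHull ℝ (Set.range T₀) := by
        have := (convex_convexHull ℝ (Set.range T₀)) hxK hy
          (a := 1 - θ) (b := θ) (by linarith) (le_of_lt hθ0) (by ring)
        convert this using 1
        module
      have h1 : ‖x‖ ≤ ‖x + θ • (y - x)‖ := by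
        calc ‖x‖ = dist (0 : E) x := by rw [dist_zero_left]
        _ = Metric.infDist (0 : E) (convexHull ℝ (Set.range T₀)) := hxdist.symm
        _ ≤ dist (0 : E) (x + θ • (y - x)) := Metric.infDist_le_dist_of_mem hmem
        _ = ‖x + θ • (y - x)‖ := by rw [dist_zero_left]
      have h2 : ‖x + θ • (y - x)‖ ^ 2 =
          ‖x‖ ^ 2 + 2 * (θ * ⟪x, y - x⟫) + θ ^ 2 * ‖y - x‖ ^ 2 := by
        rw [norm_add_sq_real, real_inner_smul_right, norm_smul]
        simp [mul_pow, abs_of_pos hθ0]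
      have h3 : ‖x‖ ^ 2 ≤ ‖x + θ • (y - x)‖ ^ 2 := by
        have := norm_nonneg x
        nlinarith
      rw [h2] at h3
      nlinarith
    have hp : 0 ≤ ⟪x, y - x⟫ := by
      by_contra hp
      push_neg at hp
      rcases eq_or_lt_of_le (sq_nonneg ‖y - x‖) with hq | hq
      · have := key 1 one_pos le_rfl
        nlinarith
      · set q := ‖y - x‖ ^ 2 with hqdef
        have hdiv : 0 < -⟪x, y - x⟫ / q := div_pos (by linarith) hq
        have hθ0 : 0 < min 1 (-⟪x, y - x⟫ / q) := lt_min one_pos hdiv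
        have hθ := key (min 1 (-⟪x, y - x⟫ / q)) hθ0 (min_le_left _ _)
        have hle : min 1 (-⟪x, y - x⟫ / q) ≤ -⟪x, y - x⟫ / q := min_le_right _ _
        have hmul : min 1 (-⟪x, y - x⟫ / q) * q ≤ -⟪x, y - x⟫ := by
          rw [← le_div_iff₀ hq]
          exact hle
        nlinarith
    have hexp : ⟪x, y⟫ = ⟪x, y - x⟫ + ‖x‖ ^ 2 := by
      rw [inner_sub_right, real_inner_self_eq_norm_sq]; ring
    linarith
  -- Carathéodory with positive weights
  obtain ⟨ι', hft, z, w, hz, hzind, hw0, hw1, hwx⟩ :=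
    eq_pos_convex_span_of_mem_convexHull hxK
  -- all the points z k lie on the hyperplane ⟪x, ·⟫ = ‖x‖²
  have hge : ∀ k, ‖x‖ ^ 2 ≤ ⟪x, z k⟫ := fun k =>
    hvar _ (subset_convexHull ℝ _ (hz ⟨k, rfl⟩))
  have hplane : ∀ k, ⟪x, z k⟫ = ‖x‖ ^ 2 := by
    intro k
    by_contra hne
    have hgt : ‖x‖ ^ 2 < ⟪x, z k⟫ := lt_of_le_of_ne (hge k) (Ne.symm hne)
    have hsum : ∑ j, w j * ⟪x, z j⟫ = ‖x‖ ^ 2 := by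
      have h' : ⟪x, ∑ j, w j • z j⟫ = ‖x‖ ^ 2 := by
        rw [hwx, real_inner_self_eq_norm_sq]
      rw [← h', inner_sum]
      simp [real_inner_smul_right]
    have hlt : ∑ j, w j * ‖x‖ ^ 2 < ∑ j, w j * ⟪x, z j⟫ := by
      apply Finset.sum_lt_sum (fun j _ => by nlinarith [hw0 j, hge j])
      exact ⟨k, Finset.mem_univ k, by nlinarith [hw0 k]⟩
    rw [← Finset.sum_mul, hw1, one_mul] at hlt
    linarith
  -- so they span an affine subspace of codimension ≥ 1, bounding their number
  have hcard' : Fintype.card ι' ≤ finrank ℝ E := by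
    by_contra hc
    push_neg at hc
    obtain ⟨g⟩ : Nonempty (Fin (finrank ℝ E + 1) ↪ ι') := by
      rw [Function.Embedding.nonempty_iff_card_le]
      simpa using hc
    have hind' : AffineIndependent ℝ (z ∘ g) := hzind.comp_embedding g
    have hnontriv : Nontrivial E := nontrivial_of_ne x 0 hx
    have hfr : 1 ≤ finrank ℝ E := finrank_pos
    have hker : vectorSpan ℝ (Set.range (z ∘ g)) ≤
        LinearMap.ker ((innerSL ℝ x : E →L[ℝ] ℝ) : E →ₗ[ℝ] ℝ) := by
      rw [vectorSpan_def, Submodule.span_le]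
      rintro u ⟨y₁, ⟨⟨k₁, rfl⟩, y₂, ⟨k₂, rfl⟩, rfl⟩⟩
      simp only [SetLike.mem_coe, LinearMap.mem_ker, ContinuousLinearMap.coe_coe,
        vsub_eq_sub, innerSL_apply_apply]
      rw [inner_sub_right]
      simp only [Function.comp_apply, hplane]
      ring
    have hkertop : LinearMap.ker ((innerSL ℝ x : E →L[ℝ] ℝ) : E →ₗ[ℝ] ℝ) < ⊤ := by
      rw [lt_top_iff_ne_top]
      intro htop
      have hxker : x ∈ LinearMap.ker ((innerSL ℝ x : E →L[ℝ] ℝ) : E →ₗ[ℝ] ℝ) := by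
        rw [htop]; trivial
      rw [LinearMap.mem_ker] at hxker
      simp only [ContinuousLinearMap.coe_coe, innerSL_apply_apply] at hxker
      rw [real_inner_self_eq_norm_sq] at hxker
      exact hx (by simpa using hxker)
    have hkerlt : finrank ℝ (LinearMap.ker ((innerSL ℝ x : E →L[ℝ] ℝ) : E →ₗ[ℝ] ℝ))
        < finrank ℝ E := by simpa using Submodule.finrank_lt_finrank_of_lt hkertop
    have hbound : finrank ℝ (vectorSpan ℝ (Set.range (z ∘ g))) ≤ finrank ℝ E - 1 := by
      have := Submodule.finrank_mono hker
      omega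
    have := (finrank_vectorSpan_le_iff_not_affineIndependent ℝ (z ∘ g)
      (n := finrank ℝ E - 1) (by simp; omega)).mp (by omega)
    exact this hind'
  -- find an index not used in the representation of x
  choose idx hidx using fun k : ι' => hz (Set.mem_range_self k)
  have hidx' : ∀ k, T₀ (idx k) = z k := hidx
  obtain ⟨i₀, hi₀⟩ : ∃ i₀ : ι, i₀ ∉ Finset.univ.image idx := by
    by_contra hall
    push_neg at hall
    have : (Finset.univ : Finset ι) ⊆ Finset.univ.image idx := fun i _ => hall i
    have hcard2 := Finset.card_le_card this
    have := Finset.card_image_le (s := (Finset.univ : Finset ι')) (f := idx)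
    simp only [Finset.card_univ] at hcard2 this
    omega
  -- pick a point of S i₀ on the non-positive side
  obtain ⟨s₀, hs₀S, hs₀⟩ : ∃ s₀ ∈ S i₀, ⟪x, s₀⟫ ≤ 0 := by
    by_contra hnone
    push_neg at hnone
    obtain ⟨c, hc0, hc1, hcx⟩ := exists_weights_s12 (f := fun p : S i₀ => (p : E))
      (x := (0 : E)) (by
        convert hS i₀
        simp)
    have h0 : (0 : ℝ) = ∑ p : S i₀, c p * ⟪x, (p : E)⟫ := by
      have : ⟪x, (0 : E)⟫ = ∑ p : S i₀, c p * ⟪x, (p : E)⟫ := by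
        rw [← hcx, inner_sum]
        simp [real_inner_smul_right]
      simpa using this
    have hpos : 0 < ∑ p : S i₀, c p * ⟪x, (p : E)⟫ := by
      have hne : Nonempty (S i₀) := by
        obtain ⟨y, hy⟩ := hSne i₀
        exact ⟨⟨y, hy⟩⟩
      obtain ⟨p₀, hp₀⟩ : ∃ p₀ : S i₀, 0 < c p₀ := by
        by_contra hn
        push_neg at hn
        have : ∑ p : S i₀, c p = 0 :=
          Finset.sum_eq_zero fun p _ => le_antisymm (hn p) (hc0 p)
        rw [hc1] at this; norm_num at this
      apply Finset.sum_pos' (fun p _ => mul_nonneg (hc0 p) (hnone _ p.2).le)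
      exact ⟨p₀, Finset.mem_univ _, mul_pos hp₀ (hnone _ p₀.2)⟩
    linarith
  -- the swapped transversal gives a strictly smaller distance: contradiction
  set T₁ := Function.update T₀ i₀ s₀ with hT₁
  have hT₁mem : T₁ ∈ Fintype.piFinset S := by
    rw [Fintype.mem_piFinset]
    intro i
    by_cases h : i = i₀
    · subst h; simp [hT₁, hs₀S]
    · simp [hT₁, Function.update_of_ne h, hT₀mem i]
  have hxT₁ : x ∈ convexHull ℝ (Set.range T₁) := by
    have hzT₁ : ∀ k, z k ∈ Set.range T₁ := by
      intro k
      refine ⟨idx k, ?_⟩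
      have hne : idx k ≠ i₀ := by
        intro h
        exact hi₀ (by rw [← h]; exact Finset.mem_image_of_mem idx (Finset.mem_univ k))
      rw [hT₁, Function.update_of_ne hne, hidx']
    rw [← hwx]
    have : ∑ k, w k • z k = Finset.univ.centerMass w z := by
      rw [Finset.centerMass_eq_of_sum_1 _ _ hw1]
    rw [this]
    exact Finset.centerMass_mem_convexHull _ (fun k _ => (hw0 k).le)
      (by rw [hw1]; norm_num) (fun k _ => hzT₁ k)
  have hs₀T₁ : s₀ ∈ convexHull ℝ (Set.range T₁) :=
    subset_convexHull ℝ _ ⟨i₀, by simp [hT₁]⟩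
  -- the point (1-ε)x + ε s₀ is strictly closer to 0
  have hxnorm : 0 < ‖x‖ := norm_pos_iff.mpr hx
  set ε : ℝ := ‖x‖ ^ 2 / (‖x‖ ^ 2 + ‖s₀‖ ^ 2 + 1) with hε
  have hεpos : 0 < ε := by positivity
  have hεlt : ε < 1 := by
    rw [hε, div_lt_one (by positivity)]
    nlinarith [sq_nonneg ‖s₀‖]
  have hzmem : (1 - ε) • x + ε • s₀ ∈ convexHull ℝ (Set.range T₁) :=
    (convex_convexHull ℝ (Set.range T₁)) hxT₁ hs₀T₁ (by linarith) hεpos.le (by ring)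
  have hznorm : ‖(1 - ε) • x + ε • s₀‖ ^ 2 < ‖x‖ ^ 2 := by
    rw [norm_add_sq_real]
    rw [norm_smul, norm_smul, real_inner_smul_left, real_inner_smul_right]
    simp only [Real.norm_eq_abs, abs_of_pos hεpos, abs_of_pos (by linarith : (0:ℝ) < 1 - ε)]
    have hεq : ε * (‖x‖ ^ 2 + ‖s₀‖ ^ 2 + 1) = ‖x‖ ^ 2 := by
      rw [hε]; field_simp
    nlinarith [mul_pos hεpos (mul_pos hεpos hxnorm), sq_nonneg ‖s₀‖,
      mul_nonneg (mul_nonneg hεpos.le (by linarith : (0:ℝ) ≤ 1 - ε)) (neg_nonneg.mpr hs₀),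
      mul_pos hεpos hxnorm]
  have hlt : Metric.infDist (0 : E) (convexHull ℝ (Set.range T₁)) < ‖x‖ := by
    calc Metric.infDist (0 : E) (convexHull ℝ (Set.range T₁))
        ≤ dist (0 : E) ((1 - ε) • x + ε • s₀) := Metric.infDist_le_dist_of_mem hzmem
      _ = ‖(1 - ε) • x + ε • s₀‖ := by rw [dist_zero_left]
      _ < ‖x‖ := by
          have h1 := norm_nonneg ((1 - ε) • x + ε • s₀)
          nlinarith
  have hge' : ‖x‖ ≤ Metric.infDist (0 : E) (convexHull ℝ (Set.range T₁)) := by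
    have := hT₀min T₁ hT₁mem
    rw [hxdist, dist_zero_left] at this
    exact this
  linarith


/-- Tverberg's theorem: every set of `(n+1)(r-1)+1` points in `ℝⁿ` can be partitioned into
`r` parts whose convex hulls have a common point. -/
theorem tverberg {n r : ℕ} (hr : 1 ≤ r) (A : Finset (EuclideanSpace ℝ (Fin n)))
    (hA : A.card = (n + 1) * (r - 1) + 1) :
    ∃ σ : EuclideanSpace ℝ (Fin n) → Fin r,
      (⋂ j, convexHull ℝ {x : EuclideanSpace ℝ (Fin n) | x ∈ A ∧ σ x = j}).Nonempty := by
  classical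
  set m := (n + 1) * (r - 1) + 1 with hm
  have e : A ≃ Fin m := A.equivFin.trans (finCongr hA)
  set a : Fin m → EuclideanSpace ℝ (Fin n) := fun i => (e.symm i : EuclideanSpace ℝ (Fin n))
    with ha
  have ha_mem : ∀ i, a i ∈ A := fun i => (e.symm i).2
  -- the simplex vectors
  set v : Fin r → Fin (r - 1) → ℝ := fun j k =>
    (if (j : ℕ) = (k : ℕ) then 1 else 0) - (if (j : ℕ) = r - 1 then 1 else 0) with hv
  have hlast : r - 1 < r := by omega
  set last : Fin r := ⟨r - 1, hlast⟩ with hlastdef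
  have hv1 : ∀ k : Fin (r - 1), ∑ j : Fin r, v j k = 0 := by
    intro k
    have hk : (k : ℕ) < r := lt_of_lt_of_le k.2 (Nat.sub_le r 1)
    have hterm : ∀ j : Fin r, v j k =
        (if j = (⟨k, hk⟩ : Fin r) then (1 : ℝ) else 0) - (if j = last then 1 else 0) := by
      intro j
      have h1 : ((j : ℕ) = (k : ℕ)) ↔ j = (⟨k, hk⟩ : Fin r) := by
        rw [Fin.ext_iff]
      have h2 : ((j : ℕ) = r - 1) ↔ j = last := by
        rw [Fin.ext_iff]
      simp only [hv]
      rw [if_congr h1 rfl rfl, if_congr h2 rfl rfl]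
    rw [Finset.sum_congr rfl fun j _ => hterm j, Finset.sum_sub_distrib]
    simp
  have hv2 : ∀ μ : Fin r → ℝ, (∀ k : Fin (r - 1), ∑ j : Fin r, μ j * v j k = 0) →
      ∀ j : Fin r, μ j = μ last := by
    intro μ hμ j
    by_cases hj : (j : ℕ) = r - 1
    · congr 1
      exact Fin.ext hj
    · have hjk : (j : ℕ) < r - 1 := by have := j.2; omega
      have hterm : ∀ j' : Fin r, μ j' * v j' (⟨j, hjk⟩ : Fin (r - 1)) =
          (if j' = j then μ j' else 0) - (if j' = last then μ j' else 0) := by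
        intro j'
        have h1 : ((j' : ℕ) = ((⟨j, hjk⟩ : Fin (r - 1)) : ℕ)) ↔ j' = j := by
          rw [Fin.ext_iff]
        have h2 : ((j' : ℕ) = r - 1) ↔ j' = last := by
          rw [Fin.ext_iff]
        simp only [hv]
        rw [if_congr h1 rfl rfl, if_congr h2 rfl rfl]
        split_ifs with hA1 hA2
        · exfalso; rw [hA1] at hA2; rw [hA2] at hj; exact hj rfl
        · ring
        · ring
        · ring
      have h0 := hμ ⟨j, hjk⟩
      rw [Finset.sum_congr rfl fun j' _ => hterm j', Finset.sum_sub_distrib] at h0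
      simp at h0
      linarith
  -- lifted points and tensor points
  set af : Fin m → Fin (n + 1) → ℝ := fun i p =>
    if h : (p : ℕ) < n then a i ⟨p, h⟩ else 1 with haf
  set L := WithLp.linearEquiv 2 ℝ ((Fin (n + 1) × Fin (r - 1)) → ℝ) with hL
  set b : Fin m → Fin r → EuclideanSpace ℝ (Fin (n + 1) × Fin (r - 1)) := fun i j =>
    L.symm fun pk => af i pk.1 * v j pk.2 with hb
  have hLb : ∀ i j, L (b i j) = fun pk => af i pk.1 * v j pk.2 := by
    intro i j
    rw [hb]
    exact L.apply_symm_apply _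
  set S : Fin m → Finset (EuclideanSpace ℝ (Fin (n + 1) × Fin (r - 1))) := fun i =>
    Finset.univ.image (b i) with hSdef
  have hScoe : ∀ i, (S i : Set (EuclideanSpace ℝ (Fin (n + 1) × Fin (r - 1)))) =
      Set.range (b i) := by
    intro i
    rw [hSdef]
    simp
  have hS : ∀ i, (0 : EuclideanSpace ℝ (Fin (n + 1) × Fin (r - 1))) ∈
      convexHull ℝ (S i : Set (EuclideanSpace ℝ (Fin (n + 1) × Fin (r - 1)))) := by
    intro i
    rw [hScoe]
    have hsum0 : ∑ j : Fin r, b i j = 0 := by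
      apply L.injective
      rw [map_sum, map_zero]
      funext pk
      rw [Finset.sum_apply]
      simp only [hLb]
      rw [← Finset.mul_sum, hv1 pk.2]
      simp
    have h := Finset.centerMass_mem_convexHull (Finset.univ : Finset (Fin r))
      (w := fun _ => (1 : ℝ)) (z := b i) (by intro j _; norm_num)
      (by simp; positivity) (fun j _ => Set.mem_range_self j)
    have hcm : (Finset.univ : Finset (Fin r)).centerMass (fun _ => (1 : ℝ)) (b i) = 0 := by
      rw [Finset.centerMass]
      simp [hsum0]
    rwa [hcm] at h
  have hrank : Module.finrank ℝ (EuclideanSpace ℝ (Fin (n + 1) × Fin (r - 1))) + 1 ≤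
      Fintype.card (Fin m) := by
    rw [finrank_euclideanSpace]
    simp [hm]
  obtain ⟨T, hTmem, hT0⟩ := colorful_caratheodory_s12 hrank S hS
  have hσ'ex : ∀ i, ∃ j, b i j = T i := by
    intro i
    have := hTmem i
    rw [hSdef] at this
    simpa using this
  choose σ' hσ' using hσ'ex
  obtain ⟨c, hc0, hc1, hcb⟩ := exists_weights_s12 hT0
  -- the grouped sums
  set u : Fin r → Fin (n + 1) → ℝ := fun j p =>
    ∑ i ∈ Finset.univ.filter (fun i => σ' i = j), c i * af i p with hu
  have key : ∀ (p : Fin (n + 1)) (k : Fin (r - 1)), ∑ j : Fin r, u j p * v j k = 0 := by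
    intro p k
    have h0 : ∑ i : Fin m, c i * (af i p * v (σ' i) k) = 0 := by
      have := congrArg L hcb
      rw [map_sum, map_zero] at this
      have := congrFun this (p, k)
      rw [Finset.sum_apply] at this
      simpa only [map_smul, ← hσ' _, hLb, Pi.smul_apply, smul_eq_mul, Pi.zero_apply] using this
    rw [← h0, ← Finset.sum_fiberwise Finset.univ σ' (fun i => c i * (af i p * v (σ' i) k))]
    refine Finset.sum_congr rfl fun j _ => ?_
    rw [hu]
    rw [Finset.sum_mul]
    refine Finset.sum_congr rfl fun i hi => ?_
    rw [(Finset.mem_filter.mp hi).2]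
    ring
  have hueq : ∀ (p : Fin (n + 1)) (j : Fin r), u j p = u last p :=
    fun p j => hv2 (fun j => u j p) (fun k => key p k) j
  -- the class weights are all 1/r
  set d : Fin r → ℝ := fun j => ∑ i ∈ Finset.univ.filter (fun i => σ' i = j), c i with hd
  have hdu : ∀ j, d j = u j ⟨n, Nat.lt_succ_self n⟩ := by
    intro j
    rw [hd, hu]
    refine Finset.sum_congr rfl fun i _ => ?_
    rw [haf]
    simp
  have hdeq : ∀ j, d j = d last := by
    intro j
    rw [hdu, hdu]
    exact hueq _ j
  have hdsum : ∑ j : Fin r, d j = 1 := by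
    rw [hd, ← hc1]
    exact Finset.sum_fiberwise _ _ _
  have hdval : ∀ j, d j = 1 / r := by
    intro j
    have : (r : ℝ) * d last = 1 := by
      rw [← hdsum]
      rw [Finset.sum_congr rfl fun j _ => hdeq j]
      simp [mul_comm]
    have hr0 : (0 : ℝ) < r := by positivity
    rw [hdeq j]
    field_simp
    linarith
  have hdpos : ∀ j, 0 < d j := by
    intro j
    rw [hdval]
    positivity
  -- the common point
  set q : EuclideanSpace ℝ (Fin n) :=
    (Finset.univ.filter (fun i => σ' i = last)).centerMass c a with hq
  -- partial sums agree across classes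
  have hsums : ∀ j : Fin r, ∑ i ∈ Finset.univ.filter (fun i => σ' i = j), c i • a i =
      ∑ i ∈ Finset.univ.filter (fun i => σ' i = last), c i • a i := by
    intro j
    set Ln := WithLp.linearEquiv 2 ℝ ((Fin n) → ℝ) with hLn
    apply Ln.injective
    rw [map_sum, map_sum]
    funext p
    rw [Finset.sum_apply, Finset.sum_apply]
    have hcast : ∀ (j' : Fin r),
        ∑ i ∈ Finset.univ.filter (fun i => σ' i = j'), (Ln (c i • a i)) p =
        u j' ⟨p, lt_of_lt_of_le p.2 (Nat.le_succ n)⟩ := by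
      intro j'
      rw [hu]
      refine Finset.sum_congr rfl fun i _ => ?_
      rw [map_smul]
      rw [haf]
      simp only [Pi.smul_apply, smul_eq_mul]
      have hdp : ((⟨(p : ℕ), lt_of_lt_of_le p.2 (Nat.le_succ n)⟩ : Fin (n + 1)) : ℕ) < n := p.2
      rw [dif_pos hdp]
      rfl
    rw [hcast, hcast]
    exact hueq _ j
  have hcm : ∀ j : Fin r, (Finset.univ.filter (fun i => σ' i = j)).centerMass c a = q := by
    intro j
    rw [hq, Finset.centerMass, Finset.centerMass]
    rw [hsums j]
    congr 2
    exact (hdeq j)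
  -- the coloring
  set σ : EuclideanSpace ℝ (Fin n) → Fin r := fun x =>
    if h : x ∈ A then σ' (e ⟨x, h⟩) else last with hσdef
  have hσa : ∀ i, σ (a i) = σ' i := by
    intro i
    simp only [hσdef]
    rw [dif_pos (ha_mem i)]
    congr 1
    have : (⟨a i, ha_mem i⟩ : A) = e.symm i := rfl
    rw [this, e.apply_symm_apply]
  refine ⟨σ, q, ?_⟩
  rw [Set.mem_iInter]
  intro j
  rw [← hcm j]
  apply Finset.centerMass_mem_convexHull
  · intro i _; exact hc0 i
  · simpa [hd] using hdpos j
  · intro i hi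
    refine ⟨ha_mem i, ?_⟩
    rw [hσa]
    exact (Finset.mem_filter.mp hi).2
end

section
/- Let 𝓕 be a finite family of convex compact sets in ℝⁿ such that the union of every subfamily of 𝓕 is (n−k)-convex (its image under every linear map ℝⁿ → ℝ^{n−k} is convex). Then the Carathéodory number of 𝓕 is at most k+1. -/
open Finset

/-- `CaraBound F κ`: for every subfamily `G ⊆ F`, the convex hull of `⋃ G` is covered by
the convex hulls of unions of subfamilies of `G` of size at most `κ`. -/
def CaraBound {n : ℕ} (F : Finset (Set (EuclideanSpace ℝ (Fin n)))) (κ : ℕ) : Prop :=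
  ∀ G ⊆ F, convexHull ℝ (⋃ S ∈ G, S) =
    {x | ∃ H ⊆ G, H.card ≤ κ ∧ x ∈ convexHull ℝ (⋃ S ∈ H, S)}

/-- The Carathéodory number `κ(F)` of a family of convex compacta: the least `κ`
satisfying `CaraBound F κ`. -/
noncomputable def caraNumber {n : ℕ} (F : Finset (Set (EuclideanSpace ℝ (Fin n)))) : ℕ :=
  sInf {κ | CaraBound F κ}

lemma continuous_finset_sup'' {β : Type*} [TopologicalSpace β] {ι : Type*} {s : Finset ι}
    (hs : s.Nonempty) {f : ι → β → ℝ} (hf : ∀ i, Continuous (f i)) :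
    Continuous fun x => s.sup' hs (fun i => f i x) := by
  induction hs using Finset.Nonempty.cons_induction with
  | singleton a => simpa using hf a
  | cons a s h hs ih =>
    have : (fun x => (Finset.cons a s h).sup' (Finset.cons_nonempty h) (fun i => f i x))
        = fun x => max (f a x) (s.sup' hs (fun i => f i x)) := by
      funext x; exact Finset.sup'_cons hs (fun i => f i x)
    rw [this]
    exact (hf a).max ih

lemma exists_ker_eq_span {n k : ℕ} (hk : k ≤ n) {ι : Type*} [Fintype ι]
    (v : ι → EuclideanSpace ℝ (Fin n)) (hv : LinearIndependent ℝ v)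
    (hcard : Fintype.card ι = k) :
    ∃ f : EuclideanSpace ℝ (Fin n) →ₗ[ℝ] EuclideanSpace ℝ (Fin (n - k)),
      ∀ w, f w = 0 ↔ w ∈ Submodule.span ℝ (Set.range v) := by
  set L : Submodule ℝ (EuclideanSpace ℝ (Fin n)) := Submodule.span ℝ (Set.range v) with hL
  have hfr : Module.finrank ℝ L = k := by
    rw [hL, finrank_span_eq_card hv, hcard]
  have hE : Module.finrank ℝ (EuclideanSpace ℝ (Fin n)) = n := by
    simp [finrank_euclideanSpace_fin]
  have hfro : Module.finrank ℝ Lᗮ = n - k := by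
    have := Submodule.finrank_add_finrank_orthogonal L
    omega
  have hfr' : Module.finrank ℝ (EuclideanSpace ℝ (Fin (n - k))) = n - k := by
    simp [finrank_euclideanSpace_fin]
  obtain ⟨e⟩ := FiniteDimensional.nonempty_linearEquiv_of_finrank_eq (hfro.trans hfr'.symm)
  refine ⟨e.toLinearMap ∘ₗ (Submodule.orthogonalProjectionOnto Lᗮ).toLinearMap, fun w => ?_⟩
  simp only [LinearMap.comp_apply, ContinuousLinearMap.coe_coe, LinearEquiv.coe_coe]
  rw [LinearEquiv.map_eq_zero_iff, Submodule.orthogonalProjectionOnto_eq_zero_iff,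
    Submodule.orthogonal_orthogonal]

lemma grouping {E : Type*} [AddCommGroup E] [Module ℝ E] {m : ℕ} (A : Fin m → Set E)
    (hA : ∀ i, Convex ℝ (A i)) (hAne : ∀ i, (A i).Nonempty) {x : E}
    (hx : x ∈ convexHull ℝ (⋃ i, A i)) :
    ∃ (y : Fin m → E) (lam : Fin m → ℝ), (∀ i, y i ∈ A i) ∧ (∀ i, 0 ≤ lam i) ∧
      ∑ i, lam i = 1 ∧ ∑ i, lam i • y i = x := by
  classical
  rcases isEmpty_or_nonempty (Fin m) with hm | hm
  · rw [Set.iUnion_of_empty, convexHull_empty] at hx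
    exact absurd hx (Set.notMem_empty x)
  rw [_root_.convexHull_eq] at hx
  obtain ⟨ι, t, w, z, hw, hw1, hz, hcm⟩ := hx
  have hsel : ∀ i : ι, ∃ j, i ∈ t → z i ∈ A j := by
    intro i
    by_cases hi : i ∈ t
    · obtain ⟨j, hj⟩ : ∃ j, z i ∈ A j := by simpa [Set.mem_iUnion] using hz i hi
      exact ⟨j, fun _ => hj⟩
    · exact ⟨hm.some, fun h => absurd h hi⟩
  choose g hg using hsel
  set lam : Fin m → ℝ := fun j => ∑ i ∈ t.filter (fun i => g i = j), w i with hlam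
  have hlam0 : ∀ j, 0 ≤ lam j := fun j =>
    Finset.sum_nonneg fun i hi => hw i (Finset.mem_filter.mp hi).1
  set y : Fin m → E := fun j =>
    if h : 0 < lam j then (t.filter (fun i => g i = j)).centerMass w z else (hAne j).some
    with hy
  have hmaps : ∀ i ∈ t, g i ∈ (Finset.univ : Finset (Fin m)) := fun i _ => Finset.mem_univ _
  have hmemy : ∀ j, y j ∈ A j := by
    intro j
    rw [hy]
    dsimp only
    split_ifs with h
    · have := Finset.centerMass_mem_convexHull (t.filter (fun i => g i = j))
        (fun i hi => hw i (Finset.mem_filter.mp hi).1) h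
        (fun i hi => by
          obtain ⟨hi1, hi2⟩ := Finset.mem_filter.mp hi
          exact hi2 ▸ hg i hi1)
      rwa [(hA j).convexHull_eq] at this
    · exact (hAne j).some_mem
  have hfib : ∀ j, lam j • y j = ∑ i ∈ t.filter (fun i => g i = j), w i • z i := by
    intro j
    rw [hy]; dsimp only
    split_ifs with h
    · rw [Finset.centerMass, smul_smul, mul_inv_cancel₀ (ne_of_gt h), one_smul]
    · have h0 : lam j = 0 := le_antisymm (not_lt.mp h) (hlam0 j)
      rw [h0, zero_smul]
      symm
      apply Finset.sum_eq_zero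
      intro i hi
      have : w i = 0 := by
        have hle : w i ≤ lam j := Finset.single_le_sum (f := w)
          (fun i hi => hw i (Finset.mem_filter.mp hi).1) hi
        have hwi := hw i (Finset.mem_filter.mp hi).1
        linarith
      rw [this, zero_smul]
  refine ⟨y, lam, hmemy, hlam0, ?_, ?_⟩
  · rw [hlam]
    dsimp only
    rw [Finset.sum_fiberwise_of_maps_to hmaps w, hw1]
  · calc ∑ j, lam j • y j = ∑ j, ∑ i ∈ t.filter (fun i => g i = j), w i • z i := by
          exact Finset.sum_congr rfl fun j _ => hfib j
      _ = ∑ i ∈ t, w i • z i := Finset.sum_fiberwise_of_maps_to hmaps _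
      _ = x := by rw [← Finset.centerMass_eq_of_sum_1 _ _ hw1, hcm]

lemma key {n : ℕ} (k : ℕ) (hk : k ≤ n) {m : ℕ} (A : Fin m → Set (EuclideanSpace ℝ (Fin n)))
    (hA : ∀ i, Convex ℝ (A i)) (hAc : ∀ i, IsCompact (A i)) (hAne : ∀ i, (A i).Nonempty)
    (himg : ∀ f : EuclideanSpace ℝ (Fin n) →ₗ[ℝ] EuclideanSpace ℝ (Fin (n - k)),
      Convex ℝ (f '' ⋃ i, A i))
    {x : EuclideanSpace ℝ (Fin n)} (hx : x ∈ convexHull ℝ (⋃ i, A i)) :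
    ∃ T : Finset (Fin m), T.card ≤ k + 1 ∧ x ∈ convexHull ℝ (⋃ i ∈ T, A i) := by
  classical
  set R : Set ((Fin m → EuclideanSpace ℝ (Fin n)) × (Fin m → ℝ)) :=
    {p | (∀ i, p.1 i ∈ A i) ∧ ((∀ i, 0 ≤ p.2 i) ∧ (∑ i, p.2 i = 1 ∧ ∑ i, p.2 i • p.1 i = x))}
    with hRdef
  have hRne : R.Nonempty := by
    obtain ⟨y, lam, h1, h2, h3, h4⟩ := grouping A hA hAne hx
    exact ⟨(y, lam), h1, h2, h3, h4⟩
  have hRclosed : IsClosed R := by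
    rw [hRdef]
    simp only [Set.setOf_and]
    refine IsClosed.inter ?_ (IsClosed.inter ?_ (IsClosed.inter ?_ ?_))
    · rw [Set.setOf_forall]
      exact isClosed_iInter fun i =>
        (hAc i).isClosed.preimage ((continuous_apply i).comp continuous_fst)
    · rw [Set.setOf_forall]
      exact isClosed_iInter fun i =>
        isClosed_le continuous_const ((continuous_apply i).comp continuous_snd)
    · exact isClosed_eq (continuous_finset_sum _ fun i _ =>
        ((continuous_apply i).comp continuous_snd)) continuous_const
    · exact isClosed_eq (continuous_finset_sum _ fun i _ =>
        ((continuous_apply i).comp continuous_snd).smul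
          ((continuous_apply i).comp continuous_fst)) continuous_const
  have hRcompact : IsCompact R := by
    have hK : IsCompact ((Set.univ.pi A) ×ˢ (Set.univ.pi fun _ : Fin m => Set.Icc (0:ℝ) 1)) :=
      (isCompact_univ_pi hAc).prod (isCompact_univ_pi fun _ => isCompact_Icc)
    refine hK.of_isClosed_subset hRclosed ?_
    rintro ⟨y, lam⟩ ⟨h1, h2, h3, _⟩
    refine ⟨fun i _ => h1 i, fun i _ => ⟨h2 i, ?_⟩⟩
    calc lam i ≤ ∑ i', lam i' :=
          Finset.single_le_sum (fun i' _ => h2 i') (Finset.mem_univ i)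
      _ = 1 := h3
  set 𝒯 : Finset (Finset (Fin m)) :=
    (Finset.univ : Finset (Fin m)).powerset.filter (fun T => T.card ≤ k + 1) with h𝒯def
  have h𝒯ne : 𝒯.Nonempty := ⟨∅, by simp [h𝒯def]⟩
  have h𝒯mem : ∀ T : Finset (Fin m), T.card ≤ k + 1 → T ∈ 𝒯 := by
    intro T hT
    simp [h𝒯def, Finset.mem_powerset, hT]
  set φ : (Fin m → EuclideanSpace ℝ (Fin n)) × (Fin m → ℝ) → ℝ :=
    fun p => 𝒯.sup' h𝒯ne (fun T => ∑ i ∈ T, p.2 i) with hφdef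
  have hφc : Continuous φ :=
    continuous_finset_sup'' h𝒯ne fun T =>
      continuous_finset_sum _ fun i _ => ((continuous_apply i).comp continuous_snd)
  obtain ⟨p, hpR, hpmax⟩ := hRcompact.exists_isMaxOn hRne hφc.continuousOn
  obtain ⟨hy, hl0, hl1, hlx⟩ := hpR
  set y : Fin m → EuclideanSpace ℝ (Fin n) := p.1 with hydef
  set lam : Fin m → ℝ := p.2 with hlamdef
  set s : ℝ := φ p with hsdef
  obtain ⟨T, hT𝒯, hTs⟩ := Finset.exists_mem_eq_sup' h𝒯ne (fun T => ∑ i ∈ T, lam i)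
  have hTk : T.card ≤ k + 1 := by
    have := Finset.mem_filter.mp hT𝒯
    exact this.2
  have contra : ∀ p' ∈ R, ∀ T' ∈ 𝒯, ∑ i ∈ T', p'.2 i ≤ s := by
    intro p' hp' T' hT'
    exact le_trans (Finset.le_sup' (fun T => ∑ i ∈ T, p'.2 i) hT') (hpmax hp')
  have hsT : ∑ i ∈ T, lam i = s := hTs.symm
  have hs1 : s ≤ 1 := by
    rw [hsdef, hφdef]
    apply Finset.sup'_le
    intro T' hT'
    calc ∑ i ∈ T', p.2 i ≤ ∑ i, p.2 i :=
          Finset.sum_le_sum_of_subset_of_nonneg (Finset.subset_univ T') (fun i _ _ => hl0 i)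
      _ = 1 := hl1
  by_cases hcase : s = 1
  · -- done
    refine ⟨T, hTk, ?_⟩
    have hoff : ∀ i ∈ Finset.univ \ T, lam i = 0 := by
      have hsum0 : ∑ i ∈ Finset.univ \ T, lam i = 0 := by
        have h := Finset.sum_sdiff (Finset.subset_univ T) (f := lam)
        rw [hl1, hsT] at h
        linarith
      intro i hi
      have := (Finset.sum_eq_zero_iff_of_nonneg (fun i' hi' => hl0 i')).mp hsum0
      exact this i hi
    have hxT : x = ∑ i ∈ T, lam i • y i := by
      rw [← hlx]
      symm
      apply Finset.sum_subset (Finset.subset_univ T)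
      intro i _ hiT
      rw [hoff i (Finset.mem_sdiff.mpr ⟨Finset.mem_univ i, hiT⟩), zero_smul]
    rw [hxT, ← Finset.centerMass_eq_of_sum_1 _ _ (by rw [hsT, hcase])]
    exact Finset.centerMass_mem_convexHull T (fun i _ => hl0 i) (by rw [hsT, hcase]; norm_num)
      (fun i hi => Set.mem_biUnion hi (hy i))
  · exfalso
    have hslt : s < 1 := lt_of_le_of_ne hs1 hcase
    have hk1 : 1 ≤ k + 1 := Nat.le_add_left 1 k
    have hspos : 0 < s := by
      obtain ⟨i, hi⟩ : ∃ i, 0 < lam i := by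
        by_contra h
        push_neg at h
        have : ∑ i, lam i = 0 :=
          Finset.sum_eq_zero fun i _ => le_antisymm (h i) (hl0 i)
        rw [hl1] at this; norm_num at this
      calc (0:ℝ) < lam i := hi
        _ = ∑ i' ∈ {i}, lam i' := by simp
        _ ≤ s := contra p ⟨hy, hl0, hl1, hlx⟩ {i} (h𝒯mem {i} (by rw [Finset.card_singleton]; omega))
    obtain ⟨j₀, hj₀T, hj₀pos⟩ : ∃ j₀, j₀ ∉ T ∧ 0 < lam j₀ := by
      have hsum : ∑ i ∈ Finset.univ \ T, lam i = 1 - s := by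
        have h := Finset.sum_sdiff (Finset.subset_univ T) (f := lam)
        rw [hl1, hsT] at h
        linarith
      by_contra h
      push_neg at h
      have : ∑ i ∈ Finset.univ \ T, lam i = 0 := by
        apply Finset.sum_eq_zero
        intro i hi
        have hiT : i ∉ T := (Finset.mem_sdiff.mp hi).2
        exact le_antisymm (h i hiT) (hl0 i)
      rw [this] at hsum
      linarith
    have hTcard : T.card = k + 1 := by
      rcases Nat.lt_or_ge T.card (k+1) with hlt | hge
      · exfalso
        have hins : (insert j₀ T).card ≤ k + 1 := by
          rw [Finset.card_insert_of_notMem hj₀T]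
          omega
        have := contra p ⟨hy, hl0, hl1, hlx⟩ (insert j₀ T) (h𝒯mem _ hins)
        rw [Finset.sum_insert hj₀T, hsT] at this
        linarith
      · omega
    have lampos : ∀ i ∈ T, 0 < lam i := by
      intro i hiT
      have hj₀e : j₀ ∉ T.erase i := fun h => hj₀T (Finset.mem_of_mem_erase h)
      have hcard' : (insert j₀ (T.erase i)).card ≤ k + 1 := by
        rw [Finset.card_insert_of_notMem hj₀e, Finset.card_erase_of_mem hiT, hTcard]
        omega
      have hle' := contra p ⟨hy, hl0, hl1, hlx⟩ (insert j₀ (T.erase i)) (h𝒯mem _ hcard')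
      rw [Finset.sum_insert hj₀e] at hle'
      have herase : ∑ i' ∈ T.erase i, lam i' = s - lam i := by
        have := Finset.add_sum_erase T lam hiT
        rw [hsT] at this
        linarith
      rw [herase] at hle'
      linarith
    have hTne : T.Nonempty := Finset.card_pos.mp (by omega)
    set i₀ : Fin m := hTne.choose with hi₀def
    have hi₀T : i₀ ∈ T := hTne.choose_spec
    set v : {i // i ∈ T.erase i₀} → EuclideanSpace ℝ (Fin n) :=
      fun i => y i - y i₀ with hvdef
    have hvcard : Fintype.card {i // i ∈ T.erase i₀} = k := by
      rw [Fintype.card_coe, Finset.card_erase_of_mem hi₀T, hTcard]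
      omega
    -- extension helper shared by both cases
    have hext : ∀ g : {i // i ∈ T.erase i₀} → ℝ, ∃ μ : Fin m → ℝ,
        (∑ i, μ i = 0) ∧ (∑ i, μ i • y i = ∑ j, g j • v j) ∧ (∀ i, i ∉ T → μ i = 0) ∧
        (∀ j : {i // i ∈ T.erase i₀}, μ (↑j) = g j) := by
      intro g
      set Ag : Fin m → ℝ := fun i => if h : i ∈ T.erase i₀ then g ⟨i, h⟩ else 0 with hAg
      set Bg : Fin m → ℝ := fun i => if i = i₀ then ∑ j, g j else 0 with hBg
      have hAsum : ∑ i, Ag i = ∑ j, g j := by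
        rw [← Finset.sum_subset (Finset.subset_univ (T.erase i₀))
          (fun i _ hi => dif_neg hi)]
        rw [← Finset.sum_attach (T.erase i₀) Ag, Finset.univ_eq_attach]
        apply Finset.sum_congr rfl
        intro j _
        exact dif_pos j.2
      have hAsmul : ∑ i, Ag i • y i = ∑ j, g j • y (↑j) := by
        rw [← Finset.sum_subset (Finset.subset_univ (T.erase i₀))
          (fun i _ hi => by rw [hAg]; dsimp only; rw [dif_neg hi, zero_smul])]
        rw [← Finset.sum_attach (T.erase i₀) (fun i => Ag i • y i), Finset.univ_eq_attach]
        apply Finset.sum_congr rfl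
        intro j _
        rw [hAg]; dsimp only; rw [dif_pos j.2]
      have hBsum : ∑ i, Bg i = ∑ j, g j := by
        rw [hBg]
        rw [Finset.sum_ite_eq' Finset.univ i₀ (fun _ => ∑ j, g j)]
        simp
      have hBsmul : ∑ i, Bg i • y i = (∑ j, g j) • y i₀ := by
        have hcongr : ∀ i ∈ Finset.univ, Bg i • y i
            = (if i = i₀ then (∑ j, g j) • y i₀ else 0) := by
          intro i _
          rw [hBg]; dsimp only
          split_ifs with h
          · rw [h]
          · rw [zero_smul]
        rw [Finset.sum_congr rfl hcongr,
          Finset.sum_ite_eq' Finset.univ i₀ (fun _ => (∑ j, g j) • y i₀)]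
        simp
      refine ⟨fun i => Ag i - Bg i, ?_, ?_, ?_, ?_⟩
      · rw [Finset.sum_sub_distrib, hAsum, hBsum, sub_self]
      · have : ∀ i, (Ag i - Bg i) • y i = Ag i • y i - Bg i • y i := fun i => sub_smul _ _ _
        rw [Finset.sum_congr rfl (fun i _ => this i), Finset.sum_sub_distrib, hAsmul, hBsmul,
          Finset.sum_smul, ← Finset.sum_sub_distrib]
        apply Finset.sum_congr rfl
        intro j _
        rw [hvdef, smul_sub]
      · intro i hiT
        have h1 : i ∉ T.erase i₀ := fun h => hiT (Finset.mem_of_mem_erase h)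
        have h2 : i ≠ i₀ := fun h => hiT (h ▸ hi₀T)
        rw [hAg, hBg]; dsimp only; rw [dif_neg h1, if_neg h2, sub_zero]
      · intro j
        have h2 : (↑j : Fin m) ≠ i₀ := (Finset.mem_erase.mp j.2).1
        rw [hAg, hBg]; dsimp only; rw [dif_pos j.2, if_neg h2, sub_zero]
    by_cases hind : LinearIndependent ℝ v
    · -- Case B : top points affinely independent; use a projection
      obtain ⟨f, hf⟩ := exists_ker_eq_span hk v hind hvcard
      have hfx : f x ∈ f '' (⋃ i, A i) := by
        have h1 : f x ∈ f '' (convexHull ℝ (⋃ i, A i)) := Set.mem_image_of_mem f hx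
        rwa [LinearMap.image_convexHull, (himg f).convexHull_eq] at h1
      obtain ⟨z, hzU, hzf⟩ := hfx
      have hzx : z - x ∈ Submodule.span ℝ (Set.range v) := by
        rw [← hf, map_sub, hzf, sub_self]
      obtain ⟨c, hc⟩ := (Submodule.mem_span_range_iff_exists_fun ℝ).mp hzx
      obtain ⟨j, hzj⟩ := Set.mem_iUnion.mp hzU
      obtain ⟨cc, hcc1, hcc2, hcc3, -⟩ := hext c
      set β : Fin m → ℝ := fun i => lam i + cc i with hβdef
      have hβsum : ∑ i, β i = 1 := by
        rw [hβdef]; dsimp only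
        rw [Finset.sum_add_distrib, hl1, hcc1, add_zero]
      have hβy : ∑ i, β i • y i = z := by
        rw [hβdef]; dsimp only
        have : ∀ i, (lam i + cc i) • y i = lam i • y i + cc i • y i :=
          fun i => add_smul _ _ _
        rw [Finset.sum_congr rfl (fun i _ => this i), Finset.sum_add_distrib, hlx, hcc2, hc]
        abel
      have hβoff : ∀ i, i ∉ T → β i = lam i := by
        intro i hi
        rw [hβdef]; dsimp only
        rw [hcc3 i hi, add_zero]
      have hβT : ∑ i ∈ T, β i = s := by
        rw [hβdef]; dsimp only
        rw [Finset.sum_add_distrib, hsT,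
          Finset.sum_subset (Finset.subset_univ T) (fun i _ hi => hcc3 i hi), hcc1, add_zero]
      set P : Finset (Fin m) := T.filter (fun i => 0 < β i) with hPdef
      have hPne : P.Nonempty := by
        by_contra h
        rw [Finset.not_nonempty_iff_eq_empty, Finset.filter_eq_empty_iff] at h
        have hle0 : ∑ i ∈ T, β i ≤ 0 :=
          Finset.sum_nonpos fun i hi => not_lt.mp (h hi)
        rw [hβT] at hle0
        linarith
      obtain ⟨i₁, hi₁P, hi₁min⟩ := Finset.exists_min_image P (fun i => lam i / β i) hPne
      have hi₁T : i₁ ∈ T := (Finset.mem_filter.mp hi₁P).1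
      have hβi₁ : 0 < β i₁ := (Finset.mem_filter.mp hi₁P).2
      set r : ℝ := lam i₁ / β i₁ with hrdef
      have hrpos : 0 < r := div_pos (lampos i₁ hi₁T) hβi₁
      set α : ℝ := min 1 r with hαdef
      have hα0 : 0 < α := lt_min one_pos hrpos
      have hα1 : α ≤ 1 := min_le_left _ _
      have hαr : α ≤ r := min_le_right _ _
      set lam' : Fin m → ℝ := fun i => lam i - α * β i with hlam'def
      have hlam'0 : ∀ i, 0 ≤ lam' i := by
        intro i
        rw [hlam'def]; dsimp only
        by_cases hiT : i ∈ T
        · rcases le_or_gt (β i) 0 with hb | hb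
          · have h5 : α * β i ≤ 0 := mul_nonpos_of_nonneg_of_nonpos (le_of_lt hα0) hb
            linarith [hl0 i]
          · have hiP : i ∈ P := by rw [hPdef, Finset.mem_filter]; exact ⟨hiT, hb⟩
            have hmin := hi₁min i hiP
            have h6 : α ≤ lam i / β i := le_trans hαr hmin
            have h7 : α * β i ≤ lam i := by
              rw [le_div_iff₀ hb] at h6
              exact h6
            linarith
        · rw [hβoff i hiT]
          have h8 : α * lam i ≤ lam i := mul_le_of_le_one_left (hl0 i) hα1
          linarith
      set d : ℝ := lam' j + α with hddef
      have hdpos : 0 < d := add_pos_of_nonneg_of_pos (hlam'0 j) hα0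
      set w : EuclideanSpace ℝ (Fin n) := d⁻¹ • (lam' j • y j + α • z) with hwdef
      have hwA : w ∈ A j := by
        have ha : 0 ≤ lam' j / d := div_nonneg (hlam'0 j) (le_of_lt hdpos)
        have hb : 0 ≤ α / d := div_nonneg (le_of_lt hα0) (le_of_lt hdpos)
        have hab : lam' j / d + α / d = 1 := by
          rw [← add_div, hddef, div_self (ne_of_gt hdpos)]
        have hmem := (hA j) (hy j) hzj ha hb hab
        have heq : (lam' j / d) • y j + (α / d) • z = w := by
          rw [hwdef, smul_add, smul_smul, smul_smul, div_eq_inv_mul, div_eq_inv_mul]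
        rwa [heq] at hmem
      set y'' : Fin m → EuclideanSpace ℝ (Fin n) := fun i => if i = j then w else y i
        with hy''def
      set lam'' : Fin m → ℝ := fun i => lam' i + (if i = j then α else 0) with hlam''def
      have hy''mem : ∀ i, y'' i ∈ A i := by
        intro i
        rw [hy''def]; dsimp only
        split_ifs with h
        · rw [h]; exact hwA
        · exact hy i
      have hlam''0 : ∀ i, 0 ≤ lam'' i := by
        intro i
        rw [hlam''def]; dsimp only
        split_ifs with h
        · linarith [hlam'0 i]
        · rw [add_zero]; exact hlam'0 i
      have hsumlam' : ∑ i, lam' i = 1 - α := by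
        rw [hlam'def]; dsimp only
        rw [Finset.sum_sub_distrib, ← Finset.mul_sum, hβsum, hl1, mul_one]
      have hsum'' : ∑ i, lam'' i = 1 := by
        rw [hlam''def]; dsimp only
        rw [Finset.sum_add_distrib, hsumlam',
          Finset.sum_ite_eq' Finset.univ j (fun _ => α)]
        simp
      have hsmullam' : ∑ i, lam' i • y i = x - α • z := by
        rw [hlam'def]; dsimp only
        have : ∀ i, (lam i - α * β i) • y i = lam i • y i - α • (β i • y i) := by
          intro i
          rw [sub_smul, mul_smul]
        rw [Finset.sum_congr rfl (fun i _ => this i), Finset.sum_sub_distrib,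
          ← Finset.smul_sum, hβy, hlx]
      have hsmul'' : ∑ i, lam'' i • y'' i = x := by
        rw [Finset.sum_eq_sum_sdiff_singleton_add (Finset.mem_univ j)
          (fun i => lam'' i • y'' i)]
        have hoff : ∀ i ∈ Finset.univ \ {j}, lam'' i • y'' i = lam' i • y i := by
          intro i hi
          have hij : i ≠ j := by
            rw [Finset.mem_sdiff, Finset.mem_singleton] at hi
            exact hi.2
          rw [hlam''def, hy''def]; dsimp only
          rw [if_neg hij, if_neg hij, add_zero]
        rw [Finset.sum_congr rfl hoff]
        have hatj : lam'' j • y'' j = lam' j • y j + α • z := by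
          rw [hlam''def, hy''def]; dsimp only
          rw [if_pos rfl, if_pos rfl, hwdef, ← hddef, smul_smul,
            mul_inv_cancel₀ (ne_of_gt hdpos), one_smul]
        rw [hatj]
        have := Finset.sum_eq_sum_sdiff_singleton_add (Finset.mem_univ j)
          (fun i => lam' i • y i)
        rw [hsmullam'] at this
        have h9 : ∑ i ∈ Finset.univ \ {j}, lam' i • y i
            = x - α • z - lam' j • y j := by
          rw [eq_sub_iff_add_eq, ← this]
        rw [h9]
        abel
      have hp'R : ((y'', lam'') :
          (Fin m → EuclideanSpace ℝ (Fin n)) × (Fin m → ℝ)) ∈ R :=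
        ⟨hy''mem, hlam''0, hsum'', hsmul''⟩
      have hTlam' : ∑ i ∈ T, lam' i = s - α * s := by
        rw [hlam'def]; dsimp only
        rw [Finset.sum_sub_distrib, ← Finset.mul_sum, hβT, hsT]
      have heqas : α - α * s = α * (1 - s) := by ring
      have hposas : 0 < α * (1 - s) := mul_pos hα0 (by linarith)
      by_cases h1r : 1 ≤ r
      · have hαeq : α = 1 := min_eq_left h1r
        have hcontra := contra (y'', lam'') hp'R {j}
          (h𝒯mem {j} (by rw [Finset.card_singleton]; omega))
        rw [Finset.sum_singleton] at hcontra
        have hcontra' : lam'' j ≤ s := hcontra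
        have hj'' : lam'' j = lam' j + α := by
          rw [hlam''def]; dsimp only
          rw [if_pos rfl]
        rw [hj'', hαeq] at hcontra'
        linarith [hlam'0 j]
      · have hr1 : r < 1 := not_le.mp h1r
        have hαeq : α = r := min_eq_right (le_of_lt hr1)
        have hlam'i₁ : lam' i₁ = 0 := by
          rw [hlam'def]; dsimp only
          rw [hαeq, hrdef, div_mul_cancel₀ _ (ne_of_gt hβi₁), sub_self]
        by_cases hjT : j ∈ T
        · have hcontra := contra (y'', lam'') hp'R T hT𝒯
          have hcontra2 : ∑ i ∈ T, lam'' i ≤ s := hcontra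
          have hTsum'' : ∑ i ∈ T, lam'' i = (s - α * s) + α := by
            rw [hlam''def]; dsimp only
            rw [Finset.sum_add_distrib, hTlam',
              Finset.sum_ite_eq' T j (fun _ => α), if_pos hjT]
          rw [hTsum''] at hcontra2
          linarith
        · have hje : j ∉ T.erase i₁ := fun h => hjT (Finset.mem_of_mem_erase h)
          have hT'card : (insert j (T.erase i₁)).card ≤ k + 1 := by
            rw [Finset.card_insert_of_notMem hje, Finset.card_erase_of_mem hi₁T, hTcard]
            omega
          have hcontra := contra (y'', lam'') hp'R (insert j (T.erase i₁))
            (h𝒯mem _ hT'card)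
          have hcontra2 : ∑ i ∈ insert j (T.erase i₁), lam'' i ≤ s := hcontra
          rw [Finset.sum_insert hje] at hcontra2
          have hlam''j : lam'' j = lam' j + α := by
            rw [hlam''def]; dsimp only
            rw [if_pos rfl]
          have hcongr : ∀ i ∈ T.erase i₁, lam'' i = lam' i := by
            intro i hi
            have hij : i ≠ j := fun h => hjT (h ▸ Finset.mem_of_mem_erase hi)
            rw [hlam''def]; dsimp only
            rw [if_neg hij, add_zero]
          rw [Finset.sum_congr rfl hcongr] at hcontra2
          have herase' : ∑ i ∈ T.erase i₁, lam' i = s - α * s := by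
            have h := Finset.add_sum_erase T lam' hi₁T
            rw [hTlam', hlam'i₁, zero_add] at h
            exact h
          rw [herase', hlam''j] at hcontra2
          linarith [hlam'0 j]
    · -- Case A : affinely dependent top points
      obtain ⟨g, hg0, istar, hgi⟩ := Fintype.not_linearIndependent_iff.mp hind
      obtain ⟨ν, hν1, hν2, hν3, hν4⟩ : ∃ ν : Fin m → ℝ, (∑ i, ν i = 0) ∧
          (∑ i, ν i • y i = 0) ∧ (∀ i, i ∉ T → ν i = 0) ∧ ν (↑istar) < 0 := by
        rcases lt_or_gt_of_ne hgi with h | h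
        · obtain ⟨μ, hμ1, hμ2, hμ3, hμ4⟩ := hext g
          exact ⟨μ, hμ1, by rw [hμ2, hg0], hμ3, by rw [hμ4]; exact h⟩
        · obtain ⟨μ, hμ1, hμ2, hμ3, hμ4⟩ := hext (fun j => -(g j))
          refine ⟨μ, hμ1, ?_, hμ3, by rw [hμ4]; linarith⟩
          rw [hμ2]
          simp only [neg_smul]
          rw [Finset.sum_neg_distrib, hg0, neg_zero]
      set N : Finset (Fin m) := T.filter (fun i => ν i < 0) with hNdef
      have hNne : N.Nonempty := by
        refine ⟨↑istar, ?_⟩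
        rw [hNdef, Finset.mem_filter]
        exact ⟨Finset.mem_of_mem_erase istar.2, hν4⟩
      obtain ⟨i₁, hi₁N, hi₁min⟩ := Finset.exists_min_image N (fun i => lam i / (-ν i)) hNne
      have hi₁T : i₁ ∈ T := (Finset.mem_filter.mp hi₁N).1
      have hνi₁ : ν i₁ < 0 := (Finset.mem_filter.mp hi₁N).2
      set sstar : ℝ := lam i₁ / (-ν i₁) with hsstardef
      have hsstar0 : 0 ≤ sstar := div_nonneg (hl0 i₁) (by linarith)
      set lam' : Fin m → ℝ := fun i => lam i + sstar * ν i with hlam'def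
      have hlam'0 : ∀ i, 0 ≤ lam' i := by
        intro i
        rw [hlam'def]; dsimp only
        rcases lt_or_ge (ν i) 0 with hneg | hpos
        · have hiT : i ∈ T := by
            by_contra hiT
            rw [hν3 i hiT] at hneg
            exact lt_irrefl 0 hneg
          have hiN : i ∈ N := by rw [hNdef, Finset.mem_filter]; exact ⟨hiT, hneg⟩
          have hmin := hi₁min i hiN
          have h2 : sstar * (-ν i) ≤ lam i := (le_div_iff₀ (by linarith)).mp hmin
          have h3 : sstar * ν i = -(sstar * (-ν i)) := by ring
          linarith
        · have h4 : 0 ≤ sstar * ν i := mul_nonneg hsstar0 hpos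
          linarith [hl0 i]
      have hlam'i₁ : lam' i₁ = 0 := by
        rw [hlam'def]; dsimp only
        rw [hsstardef]
        have hne : ν i₁ ≠ 0 := ne_of_lt hνi₁
        field_simp
        ring
      have hp'R : ((y, lam') : (Fin m → EuclideanSpace ℝ (Fin n)) × (Fin m → ℝ)) ∈ R := by
        refine ⟨hy, hlam'0, ?_, ?_⟩
        · dsimp only
          rw [hlam'def]
          dsimp only
          rw [Finset.sum_add_distrib, ← Finset.mul_sum, hν1, hl1, mul_zero, add_zero]
        · dsimp only
          rw [hlam'def]
          dsimp only
          have : ∀ i, (lam i + sstar * ν i) • y i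
              = lam i • y i + sstar • (ν i • y i) := by
            intro i
            rw [add_smul, mul_smul]
          rw [Finset.sum_congr rfl (fun i _ => this i), Finset.sum_add_distrib,
            ← Finset.smul_sum, hν2, smul_zero, add_zero, hlx]
      have hj₀e : j₀ ∉ T.erase i₁ := fun h => hj₀T (Finset.mem_of_mem_erase h)
      have hT'card : (insert j₀ (T.erase i₁)).card ≤ k + 1 := by
        rw [Finset.card_insert_of_notMem hj₀e, Finset.card_erase_of_mem hi₁T, hTcard]
        omega
      have hcontra := contra (y, lam') hp'R (insert j₀ (T.erase i₁)) (h𝒯mem _ hT'card)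
      dsimp only at hcontra
      rw [Finset.sum_insert hj₀e] at hcontra
      have hνT : ∑ i ∈ T, ν i = 0 := by
        rw [Finset.sum_subset (Finset.subset_univ T) (fun i _ hi => hν3 i hi), hν1]
      have hsumT : ∑ i ∈ T, lam' i = s := by
        rw [hlam'def]
        dsimp only
        rw [Finset.sum_add_distrib, ← Finset.mul_sum, hνT, hsT, mul_zero, add_zero]
      have herase : ∑ i ∈ T.erase i₁, lam' i = s := by
        have h := Finset.add_sum_erase T lam' hi₁T
        rw [hsumT, hlam'i₁, zero_add] at h
        exact h
      have hlamj₀ : lam' j₀ = lam j₀ := by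
        rw [hlam'def]; dsimp only
        rw [hν3 j₀ hj₀T, mul_zero, add_zero]
      rw [herase, hlamj₀] at hcontra
      linarith

/-- If the union of every subfamily of `F` is `(n-k)`-convex, then the Carathéodory number
of `F` is at most `k+1`. -/
theorem caraNumber_le_of_k_convex {n k : ℕ} (hk : k ≤ n)
    (F : Finset (Set (EuclideanSpace ℝ (Fin n))))
    (hcvx : ∀ S ∈ F, Convex ℝ S) (hcpt : ∀ S ∈ F, IsCompact S)
    (hconv : ∀ G ⊆ F, ∀ f : EuclideanSpace ℝ (Fin n) →ₗ[ℝ] EuclideanSpace ℝ (Fin (n - k)),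
      Convex ℝ (f '' ⋃ S ∈ G, S)) :
    caraNumber F ≤ k + 1 := by
  classical
  have hbound : CaraBound F (k + 1) := by
    intro G hG
    apply Set.Subset.antisymm
    · intro x hx
      set G' : Finset (Set (EuclideanSpace ℝ (Fin n))) :=
        G.filter (fun S => S.Nonempty) with hG'def
      have hG'G : G' ⊆ G := Finset.filter_subset _ _
      have hG'F : G' ⊆ F := hG'G.trans hG
      have hUnion : (⋃ S ∈ G', S) = ⋃ S ∈ G, S := by
        apply Set.Subset.antisymm
        · exact Set.biUnion_subset_biUnion_left (fun S hS => hG'G hS)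
        · intro p hp
          obtain ⟨S, hS, hpS⟩ := Set.mem_iUnion₂.mp hp
          exact Set.mem_biUnion (Finset.mem_filter.mpr ⟨hS, ⟨p, hpS⟩⟩) hpS
      set e := G'.equivFin with hedef
      set A : Fin G'.card → Set (EuclideanSpace ℝ (Fin n)) :=
        fun i => ((e.symm i : {S // S ∈ G'}) : Set (EuclideanSpace ℝ (Fin n))) with hAdef
      have hAmemG' : ∀ i, A i ∈ G' := fun i => (e.symm i).2
      have hAU : (⋃ i, A i) = ⋃ S ∈ G', S := by
        apply Set.Subset.antisymm
        · intro p hp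
          obtain ⟨i, hp⟩ := Set.mem_iUnion.mp hp
          exact Set.mem_biUnion (hAmemG' i) hp
        · intro p hp
          obtain ⟨S, hS, hpS⟩ := Set.mem_iUnion₂.mp hp
          refine Set.mem_iUnion.mpr ⟨e ⟨S, hS⟩, ?_⟩
          rw [hAdef]
          simp only [Equiv.symm_apply_apply]
          exact hpS
      have hx' : x ∈ convexHull ℝ (⋃ i, A i) := by
        rw [hAU, hUnion]; exact hx
      obtain ⟨T, hTcard, hxT⟩ := key k hk A
        (fun i => hcvx _ (hG'F (hAmemG' i)))
        (fun i => hcpt _ (hG'F (hAmemG' i)))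
        (fun i => (Finset.mem_filter.mp (hAmemG' i)).2)
        (fun f => by rw [hAU]; exact hconv G' hG'F f)
        hx'
      refine ⟨T.image (fun i => A i), ?_, ?_, ?_⟩
      · intro S hS
        obtain ⟨i, _, rfl⟩ := Finset.mem_image.mp hS
        exact hG'G (hAmemG' i)
      · exact (Finset.card_image_le).trans hTcard
      · refine convexHull_mono ?_ hxT
        intro p hp
        obtain ⟨i, hi, hpi⟩ := Set.mem_iUnion₂.mp hp
        exact Set.mem_biUnion (Finset.mem_image.mpr ⟨i, hi, rfl⟩) hpi
    · rintro x ⟨H, hHG, _, hxH⟩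
      exact convexHull_mono (Set.biUnion_subset_biUnion_left (fun S hS => hHG hS)) hxH
  exact Nat.sInf_le hbound
end

section
/- Let S = {s₁, …, s_r} ⊂ ℝ^{r−1} be the vertex set of a regular simplex centered at the origin, let c₁, …, c_m ∈ ℝ^{n+1}, and for each i let x_i = s_{σ(i)} ⊗ c_i ∈ ℝ^{r−1} ⊗ ℝ^{n+1} for some assignment σ : {1,…,m} → {1,…,r}. Set P_j = σ⁻¹(j). Then 0 ∈ conv{x₁, …, x_m} if and only if ⋂_{j=1}^r conv{c_i : i ∈ P_j} ≠ ∅, where each c_i lies in the affine hyperplane x_{n+1} = 1 of ℝ^{n+1}. -/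
open Finset


/-- Applying a finite sum of Euclidean vectors coordinatewise. -/
lemma sarkaria_sum_apply {k : ℕ} {ι : Type*} (t : Finset ι)
    (f : ι → EuclideanSpace ℝ (Fin k)) (p : Fin k) :
    (∑ j ∈ t, f j) p = ∑ j ∈ t, f j p := by
  induction t using Finset.cons_induction with
  | empty => rfl
  | cons a s ha ih => rw [Finset.sum_cons, Finset.sum_cons, ← ih]; rfl

/-- Norms of regular-simplex vertices centered at origin are all equal. -/
lemma sarkaria_norm_eq {r : ℕ} (s : Fin r → EuclideanSpace ℝ (Fin (r - 1)))
    (hsum : ∑ j, s j = 0) {d : ℝ}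
    (_hdist : ∀ j j', j ≠ j' → dist (s j) (s j') = d)
    (hip : ∀ p q : Fin r, p ≠ q →
      (inner ℝ (s p) (s q) : ℝ) = (‖s p‖ ^ 2 + ‖s q‖ ^ 2 - d ^ 2) / 2)
    (p q : Fin r) : ‖s p‖ ^ 2 = ‖s q‖ ^ 2 := by
  by_cases hpq : p = q
  · rw [hpq]
  have hzero : ∀ k : Fin r, ∑ i, (inner ℝ (s i) (s k) : ℝ) = 0 := by
    intro k
    have h0 : (inner ℝ (∑ i, s i) (s k) : ℝ) = 0 := by rw [hsum, inner_zero_left]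
    rw [sum_inner] at h0
    exact h0
  set f : Fin r → ℝ := fun i => (inner ℝ (s i) (s p) : ℝ) - (inner ℝ (s i) (s q) : ℝ) with hf
  have hfs : ∑ i, f i = 0 := by
    rw [Finset.sum_sub_distrib, hzero, hzero, sub_zero]
  have hsub : ({p, q} : Finset (Fin r)) ⊆ univ := subset_univ _
  have hsplit : ∑ i, f i = ∑ i ∈ univ \ {p, q}, f i + (f p + f q) := by
    rw [← Finset.sum_sdiff hsub, Finset.sum_pair hpq]
  have hrest : ∑ i ∈ univ \ {p, q}, f i
      = ((univ \ ({p, q} : Finset (Fin r))).card : ℝ) * ((‖s p‖ ^ 2 - ‖s q‖ ^ 2) / 2) := by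
    rw [Finset.sum_congr rfl, Finset.sum_const, nsmul_eq_mul]
    intro i hi
    simp only [Finset.mem_sdiff, Finset.mem_insert, Finset.mem_singleton, not_or] at hi
    rw [hf]
    simp only
    rw [hip i p hi.2.1, hip i q hi.2.2]
    ring
  have hfp : f p = (‖s p‖ ^ 2 - ‖s q‖ ^ 2 + d ^ 2) / 2 := by
    rw [hf]
    simp only
    rw [real_inner_self_eq_norm_sq, hip p q hpq]
    ring
  have hfq : f q = (‖s p‖ ^ 2 - ‖s q‖ ^ 2 - d ^ 2) / 2 := by
    rw [hf]
    simp only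
    rw [real_inner_self_eq_norm_sq, hip q p (Ne.symm hpq)]
    ring
  have hcard : (0 : ℝ) ≤ ((univ \ ({p, q} : Finset (Fin r))).card : ℝ) := Nat.cast_nonneg _
  rw [hsplit, hrest, hfp, hfq] at hfs
  nlinarith [hfs, hcard]

/-- Any linear relation among the vertices of a regular simplex centered at the origin
has all coefficients equal. -/
lemma sarkaria_coeff_eq {r : ℕ} (s : Fin r → EuclideanSpace ℝ (Fin (r - 1)))
    (hsum : ∑ j, s j = 0) {d : ℝ} (hd : 0 < d)
    (hdist : ∀ j j', j ≠ j' → dist (s j) (s j') = d)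
    (a : Fin r → ℝ) (ha : ∑ j, a j • s j = 0) (j k : Fin r) : a j = a k := by
  by_cases hjk : j = k
  · rw [hjk]
  have hip : ∀ p q : Fin r, p ≠ q →
      (inner ℝ (s p) (s q) : ℝ) = (‖s p‖ ^ 2 + ‖s q‖ ^ 2 - d ^ 2) / 2 := by
    intro p q h
    have h1 : ‖s p - s q‖ = d := by rw [← dist_eq_norm]; exact hdist p q h
    have h2 : ‖s p - s q‖ ^ 2 = ‖s p‖ ^ 2 - 2 * (inner ℝ (s p) (s q) : ℝ) + ‖s q‖ ^ 2 :=
      norm_sub_sq_real _ _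
    rw [h1] at h2
    linarith
  have hN := sarkaria_norm_eq s hsum hdist hip
  have hrel : ∀ k : Fin r, ∑ i, a i * (inner ℝ (s i) (s k) : ℝ) = 0 := by
    intro k
    have h0 : (inner ℝ (∑ i, a i • s i) (s k) : ℝ) = 0 := by rw [ha, inner_zero_left]
    rw [sum_inner] at h0
    simpa only [real_inner_smul_left] using h0
  set f : Fin r → ℝ :=
    fun i => a i * ((inner ℝ (s i) (s j) : ℝ) - (inner ℝ (s i) (s k) : ℝ)) with hf
  have hfs : ∑ i, f i = 0 := by
    have : ∑ i, f i = ∑ i, a i * (inner ℝ (s i) (s j) : ℝ)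
        - ∑ i, a i * (inner ℝ (s i) (s k) : ℝ) := by
      rw [← Finset.sum_sub_distrib]
      exact Finset.sum_congr rfl fun i _ => by rw [hf]; ring
    rw [this, hrel, hrel, sub_zero]
  have hsub : ({j, k} : Finset (Fin r)) ⊆ univ := subset_univ _
  have hsplit : ∑ i, f i = ∑ i ∈ univ \ {j, k}, f i + (f j + f k) := by
    rw [← Finset.sum_sdiff hsub, Finset.sum_pair hjk]
  have hrest : ∑ i ∈ univ \ {j, k}, f i = 0 := by
    apply Finset.sum_eq_zero
    intro i hi
    simp only [Finset.mem_sdiff, Finset.mem_insert, Finset.mem_singleton, not_or] at hi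
    rw [hf]
    simp only
    rw [hip i j hi.2.1, hip i k hi.2.2, hN j k]
    ring
  have hfj : f j = a j * (d ^ 2 / 2) := by
    rw [hf]
    simp only
    rw [real_inner_self_eq_norm_sq, hip j k hjk, hN j k]
    ring
  have hfk : f k = -(a k * (d ^ 2 / 2)) := by
    rw [hf]
    simp only
    rw [real_inner_self_eq_norm_sq, hip k j (Ne.symm hjk), hN j k]
    ring
  rw [hsplit, hrest, hfj, hfk, zero_add] at hfs
  have hd2 : d ^ 2 / 2 ≠ 0 := by positivity
  have : (a j - a k) * (d ^ 2 / 2) = 0 := by linarith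
  rcases mul_eq_zero.mp this with h | h
  · linarith
  · exact absurd h hd2

/-- Membership in the convex hull of the range of a finite family. -/
lemma sarkaria_mem_convexHull_range_iff {E : Type*} [AddCommGroup E] [Module ℝ E]
    {m : ℕ} (v : Fin m → E) (y : E) :
    y ∈ convexHull ℝ (Set.range v) ↔
      ∃ w : Fin m → ℝ, (∀ i, 0 ≤ w i) ∧ ∑ i, w i = 1 ∧ ∑ i, w i • v i = y := by
  constructor
  · intro hy
    rw [convexHull_range_eq_exists_affineCombination] at hy
    obtain ⟨t, w, hw0, hw1, hy⟩ := hy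
    refine ⟨fun i => if i ∈ t then w i else 0, fun i => ?_, ?_, ?_⟩
    · dsimp only
      split <;> [exact hw0 _ ‹_›; rfl]
    · rw [Finset.sum_ite_mem, Finset.univ_inter, hw1]
    · rw [← hy, affineCombination_eq_linear_combination t v w hw1]
      rw [Finset.sum_congr rfl (g := fun i => if i ∈ t then w i • v i else 0)
        (fun i _ => by dsimp only; split <;> simp), Finset.sum_ite_mem, Finset.univ_inter]
  · rintro ⟨w, hw0, hw1, hy⟩
    exact mem_convexHull_of_exists_fintype w v hw0 hw1 (fun i => Set.mem_range_self i) hy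

/-- Sarkaria's tensor trick: with `s` the vertices of a regular simplex in `ℝ^{r-1}`
centered at the origin, points `c i` at height `1` in `ℝ^{n+1}`, and `x i = s (σ i) ⊗ c i`,
the origin lies in `conv {x 1, …, x m}` iff the convex hulls of the parts
`{c i : σ i = j}` have a common point. -/
theorem sarkaria {n r m : ℕ} (hr : 1 ≤ r)
    (s : Fin r → EuclideanSpace ℝ (Fin (r - 1)))
    (hsum : ∑ j, s j = 0)
    (hreg : ∃ d : ℝ, 0 < d ∧ ∀ j j', j ≠ j' → dist (s j) (s j') = d)
    (c : Fin m → (Fin (n + 1) → ℝ))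
    (hc : ∀ i, c i (Fin.last n) = 1)
    (σ : Fin m → Fin r)
    (x : Fin m → (Fin (r - 1) × Fin (n + 1) → ℝ))
    (hx : ∀ i, x i = fun q => s (σ i) q.1 * c i q.2) :
    (0 : Fin (r - 1) × Fin (n + 1) → ℝ) ∈ convexHull ℝ (Set.range x) ↔
      (⋂ j, convexHull ℝ (c '' {i | σ i = j})).Nonempty := by
  obtain ⟨d, hd, hdist⟩ := hreg
  have hr0 : (0 : ℝ) < (r : ℝ) := by exact_mod_cast hr
  constructor
  · -- forward direction
    intro h0
    rw [sarkaria_mem_convexHull_range_iff] at h0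
    obtain ⟨w, hw0, hw1, hwx⟩ := h0
    -- pointwise identity
    have hx0 : ∀ p q, ∑ i, w i * (s (σ i) p * c i q) = 0 := by
      intro p q
      have := congrFun hwx (p, q)
      simpa [Finset.sum_apply, hx] using this
    set v : Fin r → Fin (n + 1) → ℝ :=
      fun j q => ∑ i ∈ univ.filter (fun i => σ i = j), w i * c i q with hv
    have hkey : ∀ q, ∑ j, v j q • s j = 0 := by
      intro q
      ext p
      have : ∑ j, v j q * s j p = 0 := by
        calc ∑ j, v j q * s j p
            = ∑ j, ∑ i ∈ univ.filter (fun i => σ i = j), w i * (s (σ i) p * c i q) := by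
              refine Finset.sum_congr rfl fun j _ => ?_
              rw [hv]
              simp only
              rw [Finset.sum_mul]
              refine Finset.sum_congr rfl fun i hi => ?_
              rw [(Finset.mem_filter.mp hi).2]
              ring
          _ = ∑ i, w i * (s (σ i) p * c i q) := Finset.sum_fiberwise _ _ _
          _ = 0 := hx0 p q
      show (∑ j, v j q • s j) p = (0 : EuclideanSpace ℝ (Fin (r - 1))) p
      rw [sarkaria_sum_apply]
      exact this
    have heq : ∀ q (j k : Fin r), v j q = v k q := fun q j k =>
      sarkaria_coeff_eq s hsum hd hdist (fun j => v j q) (hkey q) j k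
    have hW : ∀ j, v j (Fin.last n) = ∑ i ∈ univ.filter (fun i => σ i = j), w i := by
      intro j
      rw [hv]
      simp only
      exact Finset.sum_congr rfl fun i _ => by rw [hc, mul_one]
    have hWsum : ∑ j, v j (Fin.last n) = 1 := by
      rw [Finset.sum_congr rfl fun j _ => hW j, Finset.sum_fiberwise, hw1]
    set j₀ : Fin r := ⟨0, hr⟩ with hj₀
    have hWval : ∀ j, v j (Fin.last n) = 1 / r := by
      have hconst : ∑ j : Fin r, v j (Fin.last n) = (r : ℝ) * v j₀ (Fin.last n) := by
        rw [Finset.sum_congr rfl fun j _ => heq (Fin.last n) j j₀, Finset.sum_const,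
          Finset.card_univ, Fintype.card_fin, nsmul_eq_mul]
      intro j
      rw [heq (Fin.last n) j j₀]
      rw [hWsum] at hconst
      field_simp
      linarith
    refine ⟨(r : ℝ) • v j₀, Set.mem_iInter.mpr fun j => ?_⟩
    have hmem := Finset.centerMass_mem_convexHull (univ.filter (fun i => σ i = j))
      (w := w) (z := c) (s := c '' {i | σ i = j}) (fun i _ => hw0 i) ?_ ?_
    · have hcm : (univ.filter (fun i => σ i = j)).centerMass w c = (r : ℝ) • v j₀ := by
        rw [Finset.centerMass]
        have hsw : ∑ i ∈ univ.filter (fun i => σ i = j), w i = 1 / r := by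
          rw [← hW j]; exact hWval j
        rw [hsw]
        have : ∑ i ∈ univ.filter (fun i => σ i = j), w i • c i = v j := by
          funext q
          rw [hv]
          simp [Finset.sum_apply]
        rw [this, show v j = v j₀ from funext fun q => heq q j j₀, one_div, inv_inv]
      rwa [hcm] at hmem
    · rw [← hW j, hWval j]
      positivity
    · intro i hi
      exact ⟨i, (Finset.mem_filter.mp hi).2, rfl⟩
  · -- backward direction
    rintro ⟨z, hz⟩
    have hz' : ∀ j, z ∈ convexHull ℝ (c '' {i | σ i = j}) := Set.mem_iInter.mp hz
    have hrep : ∀ j, ∃ (ι : Type) (_ : Fintype ι) (w : ι → ℝ) (g : ι → Fin m),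
        (∀ k, 0 ≤ w k) ∧ ∑ k, w k = 1 ∧ (∀ k, σ (g k) = j) ∧ ∑ k, w k • c (g k) = z := by
      intro j
      obtain ⟨ι, inst, w, f, hw0, hw1, hf, hfsum⟩ :=
        mem_convexHull_iff_exists_fintype.mp (hz' j)
      choose g hg1 hg2 using hf
      exact ⟨ι, inst, w, g, hw0, hw1, hg1, by simp only [hg2]; exact hfsum⟩
    choose ι inst w g hw0 hw1 hgj hgsum using hrep
    letI : ∀ j, Fintype (ι j) := inst
    refine mem_convexHull_of_exists_fintype (ι := Σ j : Fin r, ι j)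
      (fun p => w p.1 p.2 / r) (fun p => x (g p.1 p.2))
      (fun p => div_nonneg (hw0 p.1 p.2) hr0.le) ?_
      (fun p => Set.mem_range_self _) ?_
    · rw [← Finset.univ_sigma_univ, Finset.sum_sigma]
      have : ∀ j, ∑ k, w j k / (r : ℝ) = 1 / r := by
        intro j
        rw [← Finset.sum_div, hw1]
      rw [Finset.sum_congr rfl fun j _ => this j, Finset.sum_const, Finset.card_univ,
        Fintype.card_fin, nsmul_eq_mul]
      field_simp
    · funext pq
      obtain ⟨p, q⟩ := pq
      have hsp : ∑ j, s j p = 0 := by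
        have h : (∑ j, s j) p = (0 : EuclideanSpace ℝ (Fin (r - 1))) p := by rw [hsum]
        rwa [sarkaria_sum_apply] at h
      have hzq : ∀ j, ∑ k, w j k * c (g j k) q = z q := by
        intro j
        have := congrFun (hgsum j) q
        simpa [Finset.sum_apply] using this
      simp only [Finset.sum_apply, Pi.smul_apply, smul_eq_mul, Pi.zero_apply]
      rw [← Finset.univ_sigma_univ, Finset.sum_sigma]
      calc ∑ j, ∑ k, w j k / (r : ℝ) * x (g j k) (p, q)
          = ∑ j, s j p * z q / r := by
            refine Finset.sum_congr rfl fun j _ => ?_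
            have e : ∀ k, w j k / (r : ℝ) * x (g j k) (p, q)
                = s j p * (w j k * c (g j k) q) / r := fun k => by
              rw [hx (g j k)]
              simp only [hgj j k]
              ring
            rw [Finset.sum_congr rfl fun k _ => e k, ← Finset.sum_div, ← Finset.mul_sum, hzq j]
        _ = (∑ j, s j p) * z q / r := by
            rw [← Finset.sum_div, ← Finset.sum_mul]
        _ = 0 := by rw [hsp, zero_mul, zero_div]
end
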